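/- arXiv:1302.1462 — 9 statements merged into one kernel-verified Lean document; each statement's English description precedes it below -/
import Mathlib

section
/- Let f : (-π/2, π/2) → (-π/2, π/2) be differentiable with f(0)=0 and λ(f) := sup|f'| < 1. Define ρ(θ) = cos(f(θ))/cos(θ). Then ρ is continuous, ρ(θ) ≥ 1 for all θ, with equality if and only if θ = 0, and ρ(θ) → +∞ as θ → ±π/2. -/
open Real Set Filter

/-- For a contracting reflection law `f`, the expansion factor
`ρ(θ) = cos (f θ) / cos θ` is continuous on `(-π/2, π/2)`, satisfies `ρ(θ) ≥ 1` with
equality iff `θ = 0`, and tends to `+∞` as `θ → ±π/2`. -/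
theorem rho_properties (f : ℝ → ℝ) (lam : ℝ)
    (hmap : ∀ θ ∈ Ioo (-(π / 2)) (π / 2), f θ ∈ Ioo (-(π / 2)) (π / 2))
    (hdiff : DifferentiableOn ℝ f (Ioo (-(π / 2)) (π / 2)))
    (hderiv : ∀ θ ∈ Ioo (-(π / 2)) (π / 2),
      |derivWithin f (Ioo (-(π / 2)) (π / 2)) θ| ≤ lam)
    (hlam : lam < 1) (hf0 : f 0 = 0) :
    ContinuousOn (fun θ => Real.cos (f θ) / Real.cos θ) (Ioo (-(π / 2)) (π / 2)) ∧
    (∀ θ ∈ Ioo (-(π / 2)) (π / 2), 1 ≤ Real.cos (f θ) / Real.cos θ) ∧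
    (∀ θ ∈ Ioo (-(π / 2)) (π / 2), Real.cos (f θ) / Real.cos θ = 1 ↔ θ = 0) ∧
    Tendsto (fun θ => Real.cos (f θ) / Real.cos θ)
      (nhdsWithin (π / 2) (Ioo (-(π / 2)) (π / 2))) atTop ∧
    Tendsto (fun θ => Real.cos (f θ) / Real.cos θ)
      (nhdsWithin (-(π / 2)) (Ioo (-(π / 2)) (π / 2))) atTop := by
  have hpi : (0:ℝ) < π / 2 := by positivity
  have h0mem : (0:ℝ) ∈ Ioo (-(π / 2)) (π / 2) := ⟨by linarith, hpi⟩
  have hlam0 : 0 ≤ lam := le_trans (abs_nonneg _) (hderiv 0 h0mem)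
  -- key Lipschitz estimate
  have hkey : ∀ θ ∈ Ioo (-(π / 2)) (π / 2), |f θ| ≤ lam * |θ| := by
    intro θ hθ
    have := (convex_Ioo (-(π/2)) (π/2)).norm_image_sub_le_of_norm_derivWithin_le
      hdiff (fun x hx => by simpa using hderiv x hx) h0mem hθ
    simpa [hf0, Real.norm_eq_abs] using this
  -- cos positivity on the interval
  have hcpos : ∀ θ ∈ Ioo (-(π / 2)) (π / 2), 0 < Real.cos θ := fun θ hθ =>
    Real.cos_pos_of_mem_Ioo hθ
  -- strict inequality away from 0
  have hstrict : ∀ θ ∈ Ioo (-(π / 2)) (π / 2), θ ≠ 0 →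
      Real.cos θ < Real.cos (f θ) := by
    intro θ hθ hθ0
    have habs : |θ| < π / 2 := abs_lt.mpr ⟨by linarith [hθ.1], hθ.2⟩
    have h1 : |f θ| < |θ| := by
      calc |f θ| ≤ lam * |θ| := hkey θ hθ
        _ < 1 * |θ| := by
          have : 0 < |θ| := abs_pos.mpr hθ0
          exact mul_lt_mul_of_pos_right hlam this
        _ = |θ| := one_mul _
    have := Real.cos_lt_cos_of_nonneg_of_le_pi (abs_nonneg (f θ))
      (by linarith [Real.pi_pos]) h1
    simpa [Real.cos_abs] using this
  have hge : ∀ θ ∈ Ioo (-(π / 2)) (π / 2), Real.cos θ ≤ Real.cos (f θ) := by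
    intro θ hθ
    by_cases hθ0 : θ = 0
    · simp [hθ0, hf0]
    · exact le_of_lt (hstrict θ hθ hθ0)
  refine ⟨?_, ?_, ?_, ?_, ?_⟩
  · -- continuity
    exact ((Real.continuous_cos.comp_continuousOn hdiff.continuousOn).div
      (Real.continuous_cos.continuousOn) (fun θ hθ => (hcpos θ hθ).ne'))
  · intro θ hθ
    exact (one_le_div (hcpos θ hθ)).mpr (hge θ hθ)
  · intro θ hθ
    constructor
    · intro h
      by_contra hθ0
      have h1 := hstrict θ hθ hθ0
      have h2 := hcpos θ hθ
      have : Real.cos (f θ) = Real.cos θ := by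
        field_simp at h; linarith [h]
      linarith
    · intro h; simp [h, hf0, Real.cos_zero]
  all_goals {
    -- both limits: the ratio is bounded below by c / cos θ with c > 0
    have hc : 0 < Real.cos (lam * (π / 2)) := by
      apply Real.cos_pos_of_mem_Ioo
      constructor
      · have : 0 ≤ lam * (π / 2) := by positivity
        linarith
      · calc lam * (π / 2) < 1 * (π / 2) := mul_lt_mul_of_pos_right hlam hpi
          _ = π / 2 := one_mul _
    have hlow : ∀ θ ∈ Ioo (-(π / 2)) (π / 2),
        Real.cos (lam * (π / 2)) ≤ Real.cos (f θ) := by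
      intro θ hθ
      have habs : |θ| ≤ π / 2 := le_of_lt (abs_lt.mpr ⟨by linarith [hθ.1], hθ.2⟩)
      have h1 : |f θ| ≤ lam * (π / 2) := by
        calc |f θ| ≤ lam * |θ| := hkey θ hθ
          _ ≤ lam * (π / 2) := mul_le_mul_of_nonneg_left habs hlam0
      have := Real.cos_le_cos_of_nonneg_of_le_pi (abs_nonneg (f θ))
        (by linarith [Real.pi_pos, mul_lt_mul_of_pos_right hlam hpi]) h1
      simpa [Real.cos_abs] using this
    have hcos0 : Tendsto Real.cos (nhdsWithin (-(π/2)) (Ioo (-(π / 2)) (π / 2))) (nhdsWithin 0 (Ioi 0)) ∧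
        Tendsto Real.cos (nhdsWithin (π/2) (Ioo (-(π / 2)) (π / 2))) (nhdsWithin 0 (Ioi 0)) := by
      constructor <;>
      · rw [tendsto_nhdsWithin_iff]
        constructor
        · refine Tendsto.mono_left ?_ nhdsWithin_le_nhds
          first
          | simpa using Real.continuous_cos.tendsto (π/2)
          | simpa using Real.continuous_cos.tendsto (-(π/2))
        · exact eventually_nhdsWithin_of_forall (fun θ hθ => hcpos θ hθ)
    have hinv : Tendsto (fun θ => Real.cos (lam * (π / 2)) * (Real.cos θ)⁻¹)
        (nhdsWithin (π/2) (Ioo (-(π / 2)) (π / 2))) atTop ∧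
        Tendsto (fun θ => Real.cos (lam * (π / 2)) * (Real.cos θ)⁻¹)
        (nhdsWithin (-(π/2)) (Ioo (-(π / 2)) (π / 2))) atTop := by
      constructor <;>
        exact Tendsto.const_mul_atTop hc (Filter.Tendsto.inv_tendsto_nhdsGT_zero (by tauto))
    have hmono : ∀ θ ∈ Ioo (-(π / 2)) (π / 2),
        Real.cos (lam * (π / 2)) * (Real.cos θ)⁻¹ ≤ Real.cos (f θ) / Real.cos θ := by
      intro θ hθ
      rw [div_eq_mul_inv]
      exact mul_le_mul_of_nonneg_right (hlow θ hθ) (inv_nonneg.mpr (hcpos θ hθ).le)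
    first
    | exact tendsto_atTop_mono' _ (eventually_nhdsWithin_of_forall hmono) hinv.1
    | exact tendsto_atTop_mono' _ (eventually_nhdsWithin_of_forall hmono) hinv.2
  }
end

section
/- Let f be a contracting reflection law with λ(f) < 1, and define ρ(θ) = cos(f(θ))/cos(θ). Then for every ε with 0 < ε < π/2, the quantity r(ε) := min_{ε ≤ |θ| < π/2} ρ(θ) satisfies r(ε) > 1. -/
open Real Set

set_option maxHeartbeats 1000000

/-- For a contracting reflection law `f` with `ρ(θ) = cos (f θ) / cos θ`, for every
`0 < ε < π/2` the quantity `r(ε) = inf { ρ(θ) : ε ≤ |θ| < π/2 }` is strictly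
greater than `1`. -/
theorem r_eps_gt_one (f : ℝ → ℝ) (lam : ℝ)
    (hmap : ∀ θ ∈ Ioo (-(π / 2)) (π / 2), f θ ∈ Ioo (-(π / 2)) (π / 2))
    (hdiff : DifferentiableOn ℝ f (Ioo (-(π / 2)) (π / 2)))
    (hderiv : ∀ θ ∈ Ioo (-(π / 2)) (π / 2),
      |derivWithin f (Ioo (-(π / 2)) (π / 2)) θ| ≤ lam)
    (hlam : lam < 1) (hf0 : f 0 = 0) :
    ∀ ε : ℝ, 0 < ε → ε < π / 2 →
      1 < sInf ((fun θ => Real.cos (f θ) / Real.cos θ) ''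
        {θ : ℝ | ε ≤ |θ| ∧ |θ| < π / 2}) := by
  intro ε hε hε2
  have hπ : (0:ℝ) < π / 2 := by linarith [Real.pi_pos]
  have h0mem : (0:ℝ) ∈ Ioo (-(π / 2)) (π / 2) := ⟨by linarith, hπ⟩
  have hlam0 : 0 ≤ lam := le_trans (abs_nonneg _) (hderiv 0 h0mem)
  -- the uniform gap
  set δ : ℝ := 2 * Real.sin ((1 + lam) * ε / 2) * Real.sin ((1 - lam) * ε / 2) with hδdef
  have hs1 : 0 < Real.sin ((1 + lam) * ε / 2) := by
    apply Real.sin_pos_of_pos_of_lt_pi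
    · nlinarith
    · nlinarith [Real.pi_pos]
  have hs2 : 0 < Real.sin ((1 - lam) * ε / 2) := by
    apply Real.sin_pos_of_pos_of_lt_pi
    · nlinarith
    · nlinarith [Real.pi_pos]
  have hδ : 0 < δ := by positivity
  have key : ∀ x ∈ ((fun θ => Real.cos (f θ) / Real.cos θ) ''
      {θ : ℝ | ε ≤ |θ| ∧ |θ| < π / 2}), 1 + δ ≤ x := by
    rintro x ⟨θ, ⟨hθ1, hθ2⟩, rfl⟩
    have hθmem : θ ∈ Ioo (-(π / 2)) (π / 2) := by
      constructor <;> cases' abs_lt.mp hθ2 with h1 h2 <;> linarith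
    have ha0 : 0 < |θ| := lt_of_lt_of_le hε hθ1
    -- |f θ| ≤ lam * |θ|
    have hfb : |f θ| ≤ lam * |θ| := by
      have := Convex.norm_image_sub_le_of_norm_derivWithin_le hdiff hderiv
        (convex_Ioo _ _) h0mem hθmem
      simpa [hf0, Real.norm_eq_abs] using this
    -- cos (f θ) ≥ cos (lam * |θ|)
    have hcos1 : Real.cos (lam * |θ|) ≤ Real.cos (f θ) := by
      rw [← Real.cos_abs (f θ)]
      apply Real.cos_le_cos_of_nonneg_of_le_pi (abs_nonneg _) _ hfb
      nlinarith [Real.pi_pos]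
    -- cos (lam * |θ|) - cos |θ| ≥ δ
    have hgap : δ ≤ Real.cos (lam * |θ|) - Real.cos |θ| := by
      rw [Real.cos_sub_cos]
      have e1 : -2 * Real.sin ((lam * |θ| + |θ|) / 2) * Real.sin ((lam * |θ| - |θ|) / 2)
          = 2 * Real.sin ((1 + lam) * |θ| / 2) * Real.sin ((1 - lam) * |θ| / 2) := by
        have : (lam * |θ| - |θ|) / 2 = -((1 - lam) * |θ| / 2) := by ring
        rw [this, Real.sin_neg]
        ring_nf
      rw [e1]
      have hmono := Real.strictMonoOn_sin.monotoneOn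
      have hb1 : Real.sin ((1 + lam) * ε / 2) ≤ Real.sin ((1 + lam) * |θ| / 2) := by
        apply hmono ⟨by nlinarith, by nlinarith⟩ ⟨by nlinarith, by nlinarith⟩
        nlinarith
      have hb2 : Real.sin ((1 - lam) * ε / 2) ≤ Real.sin ((1 - lam) * |θ| / 2) := by
        apply hmono ⟨by nlinarith, by nlinarith⟩ ⟨by nlinarith, by nlinarith⟩
        nlinarith
      have hs2' : 0 < Real.sin ((1 - lam) * |θ| / 2) := lt_of_lt_of_le hs2 hb2
      nlinarith
    have hcosθpos : 0 < Real.cos θ := Real.cos_pos_of_mem_Ioo hθmem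
    have hcosθle : Real.cos θ ≤ 1 := Real.cos_le_one θ
    have hcabs : Real.cos |θ| = Real.cos θ := Real.cos_abs θ
    simp only []
    rw [le_div_iff₀ hcosθpos]
    nlinarith
  have hne : ((fun θ => Real.cos (f θ) / Real.cos θ) ''
      {θ : ℝ | ε ≤ |θ| ∧ |θ| < π / 2}).Nonempty := by
    exact ⟨_, ⟨ε, ⟨by rw [abs_of_pos hε], by rw [abs_of_pos hε]; exact hε2⟩, rfl⟩⟩
  calc (1:ℝ) < 1 + δ := by linarith
    _ ≤ _ := le_csInf hne key
end

section
/- Let 0 < λ < 1, 0 < θ₀ < λπ/2, and m > m_λ where m_λ = (2/log λ)·log((2/π)·cos(πλ/2)). If |θ| satisfies cos|θ| ≤ sin(λ^{m-1}·θ₀), then cos(f(θ))/cos(θ) ≥ λ^{-m/2} for any function f with |f(θ)| ≤ λπ/2 (so that cos(f(θ)) ≥ cos(πλ/2)). -/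
open Real

/-- Key estimate for rectangles: if `0 < λ < 1`, `0 < θ₀ < λπ/2` and `m > m_λ` where
`m_λ = (2 / log λ) · log ((2/π) cos (πλ/2))`, then for any angle `θ ∈ (-π/2, π/2)` with
`cos |θ| ≤ sin (λ^(m-1) θ₀)` and any value `fθ` with `cos fθ ≥ cos (πλ/2)`, the
expansion factor satisfies `cos fθ / cos θ ≥ λ^(-m/2)`. -/
theorem rectangle_long_block_expansion (lam θ₀ : ℝ) (m : ℕ) (θ fθ : ℝ)
    (hlam0 : 0 < lam) (hlam1 : lam < 1)
    (hθ₀ : 0 < θ₀) (hθ₀' : θ₀ < lam * π / 2)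
    (hm : (m : ℝ) > 2 / Real.log lam * Real.log (2 / π * Real.cos (π * lam / 2)))
    (hθ : |θ| < π / 2)
    (hcos : Real.cos |θ| ≤ Real.sin (lam ^ (m - 1) * θ₀))
    (hf : Real.cos fθ ≥ Real.cos (π * lam / 2)) :
    Real.cos fθ / Real.cos θ ≥ lam ^ (-(m : ℝ) / 2) := by
  have hpi : (0:ℝ) < π := Real.pi_pos
  have ha : Real.log lam < 0 := Real.log_neg hlam0 hlam1
  set c := Real.cos (π * lam / 2) with hc_def
  have hc0 : 0 < c := by
    apply Real.cos_pos_of_mem_Ioo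
    constructor
    · nlinarith
    · nlinarith
  have hc1 : c ≤ 1 := Real.cos_le_one _
  have h2pi : (2:ℝ) < π := by linarith [Real.pi_gt_three]
  have hprod0 : 0 < 2 / π * c := by positivity
  have hprod1 : 2 / π * c < 1 := by
    have : 2 / π < 1 := by
      rw [div_lt_one hpi]; exact h2pi
    nlinarith
  have hL : Real.log (2 / π * c) < 0 := Real.log_neg hprod0 hprod1
  -- m ≥ 1
  have hmlam_pos : 0 < 2 / Real.log lam * Real.log (2 / π * c) := by
    apply mul_pos_of_neg_of_neg _ hL
    exact div_neg_of_pos_of_neg (by norm_num) ha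
  have hm1 : 1 ≤ m := by
    by_contra h
    push_neg at h
    interval_cases m
    simp at hm
    linarith
  -- key: lam ^ (m/2) < 2/π * c  (as rpow)
  have hkey : lam ^ ((m:ℝ)/2) < 2 / π * c := by
    have hma : (m:ℝ) * Real.log lam < 2 * Real.log (2 / π * c) := by
      have h1 : (2 / Real.log lam * Real.log (2 / π * c)) * Real.log lam
          = 2 * Real.log (2 / π * c) := by
        field_simp
        exact mul_div_cancel_left₀ _ ha.ne
      nlinarith [mul_lt_mul_of_neg_right hm ha]
    have : ((m:ℝ)/2) * Real.log lam < Real.log (2 / π * c) := by linarith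
    calc lam ^ ((m:ℝ)/2) = Real.exp (((m:ℝ)/2) * Real.log lam) := by
          rw [Real.rpow_def_of_pos hlam0]; ring_nf
      _ < Real.exp (Real.log (2 / π * c)) := Real.exp_lt_exp.mpr this
      _ = 2 / π * c := Real.exp_log hprod0
  -- cos θ bound
  have hcosθpos : 0 < Real.cos θ := by
    apply Real.cos_pos_of_mem_Ioo
    constructor
    · cases abs_lt.mp hθ; linarith
    · cases abs_lt.mp hθ; linarith
  have hpow_pos : (0:ℝ) < lam ^ (m - 1) := pow_pos hlam0 _
  have hsin_le : Real.sin (lam ^ (m - 1) * θ₀) ≤ lam ^ (m - 1) * θ₀ :=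
    Real.sin_le (by positivity)
  have hpow_m : lam ^ (m - 1) * lam = lam ^ m := by
    rw [← pow_succ, Nat.sub_add_cancel hm1]
  have hcosθ_le : Real.cos θ ≤ lam ^ m * (π / 2) := by
    have h1 : Real.cos θ ≤ lam ^ (m - 1) * θ₀ := by
      rw [← Real.cos_abs]; linarith
    have h2 : lam ^ (m - 1) * θ₀ ≤ lam ^ (m - 1) * (lam * π / 2) := by
      apply mul_le_mul_of_nonneg_left (le_of_lt hθ₀') (le_of_lt hpow_pos)
    calc Real.cos θ ≤ lam ^ (m - 1) * (lam * π / 2) := le_trans h1 h2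
      _ = lam ^ (m - 1) * lam * (π / 2) := by ring
      _ = lam ^ m * (π / 2) := by rw [hpow_m]
  -- finish
  rw [ge_iff_le, le_div_iff₀ hcosθpos]
  have hrpos : (0:ℝ) < lam ^ (-(m:ℝ)/2) := Real.rpow_pos_of_pos hlam0 _
  have hcomb : lam ^ (-(m:ℝ)/2) * (lam ^ m * (π/2)) = lam ^ ((m:ℝ)/2) * (π/2) := by
    rw [← Real.rpow_natCast lam m, ← mul_assoc, ← Real.rpow_add hlam0]
    ring_nf
  refine le_of_lt ?_
  calc lam ^ (-(m:ℝ)/2) * Real.cos θ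
      ≤ lam ^ (-(m:ℝ)/2) * (lam ^ m * (π/2)) :=
        mul_le_mul_of_nonneg_left hcosθ_le (le_of_lt hrpos)
    _ = lam ^ ((m:ℝ)/2) * (π/2) := hcomb
    _ < (2 / π * c) * (π/2) := by nlinarith
    _ = c := by field_simp
    _ ≤ Real.cos fθ := hf
end

section
/- For the map φ₀(s) = -(1/β)(s - 1/2) + ε(s) on [0,1), where β = cos(π/d) and ε(s) = 1 if s ≥ 1/2, 0 otherwise, one has for all n ≥ 1: φ₀ⁿ(s) = 1/2 + ((-1)ⁿ/βⁿ)(s - 1/2) + (1/(2β^{n-1}))·∑_{j=0}^{n-1} (-1)^{n-j-1} δ_j(s) β^j, where δ_j(s) = 2ε(φ₀^j(s)) - 1 ∈ {-1, 1}. -/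
open Real Finset

/-- `ε(s) = 1` if `s ≥ 1/2`, and `0` otherwise. -/
noncomputable def slapEps (s : ℝ) : ℝ := if 1 / 2 ≤ s then 1 else 0

/-- The reduced slap map `φ₀(s) = -(1/β)(s - 1/2) + ε(s)`. -/
noncomputable def slapMap (β : ℝ) (s : ℝ) : ℝ := -(1 / β) * (s - 1 / 2) + slapEps s

/-- Iteration formula for the reduced slap map of a regular `d`-gon: for all `n ≥ 1`,
`φ₀ⁿ(s) = 1/2 + ((-1)ⁿ/βⁿ)(s - 1/2) + (1/(2β^(n-1))) ∑_{j<n} (-1)^(n-j-1) δⱼ(s) βʲ`,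
where `β = cos (π/d)` and `δⱼ(s) = 2 ε(φ₀ʲ(s)) - 1`. -/
theorem slap_iterate_formula (d : ℕ) (hd : Odd d) (hd3 : 3 ≤ d) (β : ℝ)
    (hβ : β = Real.cos (π / d)) (s : ℝ) (hs : s ∈ Set.Ico (0 : ℝ) 1) :
    ∀ n : ℕ, 1 ≤ n →
      (slapMap β)^[n] s =
        1 / 2 + ((-1 : ℝ) ^ n / β ^ n) * (s - 1 / 2) +
          (1 / (2 * β ^ (n - 1))) *
            ∑ j ∈ Finset.range n,
              (-1 : ℝ) ^ (n - j - 1) * (2 * slapEps ((slapMap β)^[j] s) - 1) * β ^ j := by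
  have hd0 : (0 : ℝ) < d := by
    have : (3 : ℝ) ≤ d := by exact_mod_cast hd3
    linarith
  have hβpos : 0 < β := by
    rw [hβ]
    apply Real.cos_pos_of_mem_Ioo
    constructor
    · have : 0 < π / d := div_pos Real.pi_pos hd0
      linarith [Real.pi_pos]
    · have h3 : (3 : ℝ) ≤ d := by exact_mod_cast hd3
      rw [div_lt_div_iff₀ hd0 two_pos]
      nlinarith [Real.pi_pos]
  have hβne : β ≠ 0 := ne_of_gt hβpos
  intro n hn
  induction n with
  | zero => omega
  | succ n ih =>
    rcases Nat.eq_zero_or_pos n with h0 | h1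
    · subst h0
      rw [Function.iterate_one, Finset.sum_range_one]
      show -(1 / β) * (s - 1 / 2) + slapEps s = _
      norm_num
      ring
    · have IH := ih h1
      set S : ℝ := ∑ j ∈ Finset.range n,
          (-1 : ℝ) ^ (n - j - 1) * (2 * slapEps ((slapMap β)^[j] s) - 1) * β ^ j with hS
      have hsum : ∑ j ∈ Finset.range (n + 1),
          (-1 : ℝ) ^ (n + 1 - j - 1) * (2 * slapEps ((slapMap β)^[j] s) - 1) * β ^ j
          = -S + (2 * slapEps ((slapMap β)^[n] s) - 1) * β ^ n := by
        rw [Finset.sum_range_succ]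
        congr 1
        · rw [hS, ← Finset.sum_neg_distrib]
          apply Finset.sum_congr rfl
          intro j hj
          rw [Finset.mem_range] at hj
          have h2 : n + 1 - j - 1 = (n - j - 1) + 1 := by omega
          rw [h2, pow_succ]
          ring
        · have : n + 1 - n - 1 = 0 := by omega
          rw [this, pow_zero]
          ring
      have hn1 : n + 1 - 1 = n := by omega
      obtain ⟨m, rfl⟩ : ∃ m, n = m + 1 := ⟨n - 1, by omega⟩
      have key : ∀ y E : ℝ,
          y = 1 / 2 + ((-1 : ℝ) ^ (m + 1) / β ^ (m + 1)) * (s - 1 / 2) + (1 / (2 * β ^ m)) * S →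
          -(1 / β) * (y - 1 / 2) + E =
            1 / 2 + ((-1 : ℝ) ^ (m + 1 + 1) / β ^ (m + 1 + 1)) * (s - 1 / 2) +
              (1 / (2 * β ^ (m + 1))) * (-S + (2 * E - 1) * β ^ (m + 1)) := by
        intro y E hy
        subst hy
        have hpowne : β ^ m ≠ 0 := pow_ne_zero _ hβne
        simp only [Nat.add_sub_cancel, pow_succ]
        field_simp
        ring
      rw [Function.iterate_succ_apply']
      show -(1 / β) * ((slapMap β)^[m + 1] s - 1 / 2) + slapEps ((slapMap β)^[m + 1] s) = _
      rw [hn1, hsum]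
      simp only [Nat.add_sub_cancel] at IH
      exact key _ _ IH
end

section
/- Let d ≥ 5 be odd and β = cos(π/d). Then the point s = 1/2 is not pre-periodic under the reduced slap map φ₀(s) = -(1/β)(s - 1/2) + ε(s), where ε(s) = 1 if s ≥ 1/2 and 0 otherwise; i.e., there is no pair n > k ≥ 0 with φ₀ⁿ(1/2) = φ₀ᵏ(1/2). -/
open Real

open Polynomial

private lemma twoCos_int (d : ℕ) (hd : Odd d) (hd5 : 5 ≤ d) :
    IsIntegral ℤ (2 * Real.cos (π / d)) ∧ IsIntegral ℤ (2 * Real.cos (π / d))⁻¹ := by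
  have hd0 : (d : ℂ) ≠ 0 := by exact_mod_cast (by positivity : (0:ℝ) < (d:ℝ)).ne'
  have hd0' : (d : ℝ) ≠ 0 := by positivity
  have hπ0 : (π : ℝ) ≠ 0 := Real.pi_ne_zero
  set ζ : ℂ := Complex.exp ((π / d : ℝ) * Complex.I) with hζdef
  have harg : ((π / d : ℝ) : ℂ) = (π : ℂ) / d := by push_cast; ring
  have hζne : ζ ≠ 0 := Complex.exp_ne_zero _
  have h2d : ζ ^ (2 * d) = 1 := by
    rw [hζdef, ← Complex.exp_nat_mul]
    rw [show ((2 * d : ℕ) : ℂ) * (((π / d : ℝ) : ℂ) * Complex.I) = (2 * π) * Complex.I by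
      rw [harg]; push_cast; field_simp]
    exact Complex.exp_two_pi_mul_I
  have hζint : IsIntegral ℤ ζ := by
    refine ⟨X ^ (2 * d) - C 1, ?_, ?_⟩
    · exact Polynomial.monic_X_pow_sub_C 1 (by omega)
    · simp [h2d]
  have hζinv : ζ⁻¹ = ζ ^ (2 * d - 1) := by
    refine (inv_eq_of_mul_eq_one_right ?_)
    rw [← pow_succ']
    rw [show 2 * d - 1 + 1 = 2 * d by omega, h2d]
  have hζinvint : IsIntegral ℤ ζ⁻¹ := by rw [hζinv]; exact hζint.pow _
  have hcast : ((2 * Real.cos (π / d) : ℝ) : ℂ) = ζ + ζ⁻¹ := by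
    push_cast
    rw [Complex.two_cos, hζdef, harg, ← Complex.exp_neg, neg_mul]
  -- ζ² ≠ 1
  have hw : (ζ ^ 2) ≠ 1 := by
    intro hw1
    rw [hζdef, ← Complex.exp_nat_mul, Complex.exp_eq_one_iff] at hw1
    obtain ⟨n, hn⟩ := hw1
    rw [harg] at hn
    have h2 : ((2 * (π / d) : ℝ) : ℂ) * Complex.I = ((n * (2 * π) : ℝ) : ℂ) * Complex.I := by
      push_cast; linear_combination hn
    have hI := mul_right_cancel₀ Complex.I_ne_zero h2
    have hR : (2 : ℝ) * (π / d) = (n : ℝ) * (2 * π) := by exact_mod_cast hI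
    have hnd : (n : ℝ) * d = 1 := by
      field_simp at hR
      have h3 : ((n : ℝ) * d - 1) * (2 * π) = 0 := by linear_combination (-2 * π) * hR
      have h4 := mul_eq_zero.mp h3
      rcases h4 with h4 | h4
      · linarith
      · exact absurd h4 (by positivity)
    have hndZ : (n : ℤ) * (d : ℤ) = 1 := by exact_mod_cast hnd
    have := Int.isUnit_iff.mp (IsUnit.of_mul_eq_one (a := (d : ℤ)) n (mul_comm (n:ℤ) d ▸ hndZ))
    omega
  obtain ⟨t, ht⟩ := hd
  set c : ℕ := t + 1 with hcdef
  have hc : 2 * c = d + 1 := by omega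
  set δ : ℂ := ∑ i ∈ Finset.range c, ζ ^ (4 * i + 1) with hδdef
  have hδint : IsIntegral ℤ δ := IsIntegral.sum _ (fun i _ => hζint.pow _)
  have hkey : (ζ + ζ⁻¹) * δ = 1 := by
    have pair : ∀ m : ℕ, ∑ j ∈ Finset.range (2 * m), (ζ^2) ^ j
        = ∑ i ∈ Finset.range m, ((ζ^2) ^ (2*i) + (ζ^2) ^ (2*i+1)) := by
      intro m
      induction m with
      | zero => simp
      | succ k ih =>
        rw [Finset.sum_range_succ, ← ih, Nat.mul_succ, Finset.sum_range_succ,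
          Finset.sum_range_succ]
        ring
    have hmul : (ζ + ζ⁻¹) * δ = ∑ i ∈ Finset.range c, ((ζ^2) ^ (2*i) + (ζ^2) ^ (2*i+1)) := by
      rw [hδdef, Finset.mul_sum]
      refine Finset.sum_congr rfl fun i _ => ?_
      have h1 : ζ * ζ ^ (4 * i + 1) = (ζ^2) ^ (2*i+1) := by
        rw [← pow_mul, show 2*(2*i+1) = (4*i+1)+1 by ring, pow_succ]; ring
      have h2 : ζ⁻¹ * ζ ^ (4 * i + 1) = (ζ^2) ^ (2*i) := by
        rw [← pow_mul, show 2*(2*i) = 4*i by ring, show 4*i+1 = (4*i)+1 from rfl,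
          pow_succ', ← mul_assoc, inv_mul_cancel₀ hζne, one_mul]
      rw [add_mul, h1, h2]; ring
    rw [hmul, ← pair, geom_sum_eq hw]
    have hpow : (ζ ^ 2) ^ (2 * c) = ζ ^ 2 := by
      rw [← pow_mul, show 2 * (2 * c) = 2 * d + 2 by omega, pow_add, h2d, one_mul]
    rw [hpow]
    exact div_self (sub_ne_zero.mpr hw)
  have hinv : (ζ + ζ⁻¹)⁻¹ = δ := inv_eq_of_mul_eq_one_right hkey
  constructor
  · rw [← isIntegral_algebraMap_iff (algebraMap ℝ ℂ).injective]
    show IsIntegral ℤ ((2 * Real.cos (π / d) : ℝ) : ℂ)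
    rw [hcast]; exact hζint.add hζinvint
  · rw [← isIntegral_algebraMap_iff (algebraMap ℝ ℂ).injective]
    show IsIntegral ℤ (((2 * Real.cos (π / d))⁻¹ : ℝ) : ℂ)
    rw [Complex.ofReal_inv, hcast, hinv]
    exact hδint

private lemma minpoly_coeff_zero_unit {x : ℝ} (hx : IsIntegral ℤ x) (hx0 : x ≠ 0)
    (hxi : IsIntegral ℤ x⁻¹) :
    (minpoly ℤ x).coeff 0 = 1 ∨ (minpoly ℤ x).coeff 0 = -1 := by
  set N' : Polynomial ℤ := minpoly ℤ x⁻¹ with hN'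
  set m' : ℕ := N'.natDegree with hm'
  set q : Polynomial ℤ := ∑ i ∈ Finset.range (m' + 1), C (N'.coeff (m' - i)) * X ^ i with hq
  have hqc0 : q.coeff 0 = 1 := by
    rw [hq, Polynomial.finset_sum_coeff]
    rw [Finset.sum_eq_single 0]
    · simp [Polynomial.coeff_C_mul, Polynomial.coeff_X_pow]
      exact (minpoly.monic hxi).coeff_natDegree
    · intro b _ hb
      simp [Polynomial.coeff_C_mul, Polynomial.coeff_X_pow, Ne.symm hb]
    · intro h
      simp at h
  have haq : Polynomial.aeval x q = 0 := by
    have hev : Polynomial.aeval x q = x ^ m' * Polynomial.aeval x⁻¹ N' := by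
      rw [hq]
      rw [map_sum]
      rw [Polynomial.aeval_eq_sum_range (p := N') (x := x⁻¹)]
      rw [Finset.mul_sum]
      rw [← Finset.sum_range_reflect]
      refine Finset.sum_congr rfl fun i hi => ?_
      rw [Finset.mem_range] at hi
      have hi' : i ≤ m' := by omega
      have h1 : m' + 1 - 1 - i = m' - i := by omega
      rw [h1]
      have h2 : m' - (m' - i) = i := by omega
      simp only [map_mul, map_pow, Polynomial.aeval_C, Polynomial.aeval_X, h2]
      rw [zsmul_eq_mul]
      have h3 : x ^ m' * (x ^ i)⁻¹ = x ^ (m' - i) := by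
        rw [← pow_sub₀ x hx0 hi']
      rw [inv_pow]
      calc (algebraMap ℤ ℝ) (N'.coeff i) * x ^ (m' - i)
          = (N'.coeff i : ℝ) * (x ^ m' * (x ^ i)⁻¹) := by rw [h3]; rfl
        _ = x ^ m' * ((N'.coeff i : ℝ) * (x ^ i)⁻¹) := by ring
    rw [hev, minpoly.aeval, mul_zero]
  have hdvd : minpoly ℤ x ∣ q := minpoly.isIntegrallyClosed_dvd hx haq
  obtain ⟨s, hs⟩ := hdvd
  have : q.coeff 0 = (minpoly ℤ x).coeff 0 * s.coeff 0 := by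
    rw [hs, Polynomial.mul_coeff_zero]
  rw [hqc0] at this
  exact Int.isUnit_iff.mp (IsUnit.of_mul_eq_one _ this.symm)

private lemma minpoly_deg_two_le {x : ℝ} (hx : IsIntegral ℤ x) (h1 : 1 < x) (h2 : x < 2) :
    2 ≤ (minpoly ℤ x).natDegree := by
  by_contra h
  push_neg at h
  have hpos : 0 < (minpoly ℤ x).natDegree := minpoly.natDegree_pos hx
  have hdeg : (minpoly ℤ x).natDegree = 1 := by omega
  have heq : minpoly ℤ x = X + C ((minpoly ℤ x).coeff 0) := by
    have := (minpoly.monic hx).eq_X_add_C hdeg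
    exact this
  have hav := minpoly.aeval ℤ x
  rw [heq] at hav
  simp only [map_add, Polynomial.aeval_X, Polynomial.aeval_C] at hav
  have : x = -((minpoly ℤ x).coeff 0 : ℝ) := by
    have : (algebraMap ℤ ℝ) ((minpoly ℤ x).coeff 0) = ((minpoly ℤ x).coeff 0 : ℝ) := rfl
    linarith [hav, this ▸ hav]
  set c : ℤ := (minpoly ℤ x).coeff 0
  have hc1 : (1 : ℝ) < -(c:ℝ) := this ▸ h1
  have hc2 : (-(c:ℝ)) < 2 := this ▸ h2
  have hA : (1 : ℤ) < -c := by exact_mod_cast hc1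
  have hB : (-c : ℤ) < 2 := by exact_mod_cast hc2
  omega

private lemma slap_core {γ β : ℝ} (hβ : β = γ / 2)
    (hγint : IsIntegral ℤ γ) (hγinv : IsIntegral ℤ γ⁻¹)
    (h1 : 1 < γ) (h2 : γ < 2)
    (hcu : (minpoly ℤ γ).coeff 0 = 1 ∨ (minpoly ℤ γ).coeff 0 = -1)
    (hm2 : 2 ≤ (minpoly ℤ γ).natDegree)
    (P : Polynomial ℤ) (hc0 : P.coeff 0 = 1 ∨ P.coeff 0 = -1)
    (hbd : ∀ i, |P.coeff i| ≤ 2) :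
    Polynomial.aeval β P ≠ 0 := by
  intro haP
  set N : Polynomial ℤ := minpoly ℤ γ with hN
  set m : ℕ := N.natDegree with hm
  -- M := N.comp (C 2 * X)
  set M : Polynomial ℤ := N.comp (C 2 * X) with hM
  have hdeg1 : (C (2:ℤ) * X).natDegree = 1 := Polynomial.natDegree_C_mul_X 2 (by norm_num)
  have hMdeg : M.natDegree = m := by
    rw [hM, Polynomial.natDegree_comp, hdeg1, mul_one]
  have hMlead : M.leadingCoeff = 2 ^ m := by
    rw [hM, Polynomial.leadingCoeff_comp (by rw [hdeg1]; norm_num)]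
    rw [(minpoly.monic hγint).leadingCoeff, one_mul]
    have : (C (2:ℤ) * X).leadingCoeff = 2 := by
      rw [Polynomial.leadingCoeff, hdeg1]
      simp
    rw [this]
  have hMc0 : M.coeff 0 = N.coeff 0 := by
    rw [Polynomial.coeff_zero_eq_eval_zero, Polynomial.coeff_zero_eq_eval_zero, hM,
      Polynomial.eval_comp]
    simp
  have hMaev : Polynomial.aeval β M = 0 := by
    rw [hM, Polynomial.aeval_comp]
    have : Polynomial.aeval β (C (2:ℤ) * X) = γ := by
      rw [map_mul, Polynomial.aeval_C, Polynomial.aeval_X, hβ]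
      show (2:ℝ) * (γ / 2) = γ
      ring
    rw [this]
    exact minpoly.aeval ℤ γ
  have hMne : M ≠ 0 := by
    intro h0
    rw [h0] at hMc0
    simp at hMc0
    rcases hcu with h | h <;> omega
  have hc0u : IsUnit (N.coeff 0) := by
    rcases hcu with h | h <;> rw [h] <;> simp
  have hMprim : M.IsPrimitive := by
    intro r hr
    have hdvd0 := (Polynomial.C_dvd_iff_dvd_coeff r M).mp hr 0
    rw [hMc0] at hdvd0
    exact isUnit_of_dvd_unit hdvd0 hc0u
  -- over ℚ
  have hγQ : IsIntegral ℚ γ := hγint.tower_top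
  have hβγ : β = (algebraMap ℚ ℝ) (2⁻¹ : ℚ) * γ := by
    have h2inv : (algebraMap ℚ ℝ) (2⁻¹ : ℚ) = (2:ℝ)⁻¹ := by norm_num
    rw [hβ, h2inv]; ring
  have hβQ : IsIntegral ℚ β := by
    rw [hβγ]
    exact (isIntegral_algebraMap).mul hγQ
  set f : Polynomial ℚ := minpoly ℚ β with hf
  set Mq : Polynomial ℚ := M.map (Int.castRingHom ℚ) with hMq
  have hcastalg : (Int.castRingHom ℚ) = algebraMap ℤ ℚ := by
    exact (algebraMap_int_eq ℚ).symm
  have hMqdeg : Mq.natDegree = m := by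
    rw [hMq, Polynomial.natDegree_map_eq_of_injective (Int.cast_injective), hMdeg]
  have hMqne : Mq ≠ 0 := by
    rw [hMq, Ne, Polynomial.map_eq_zero_iff (Int.cast_injective)]
    exact hMne
  have hMqaev : Polynomial.aeval β Mq = 0 := by
    rw [hMq, hcastalg, Polynomial.aeval_map_algebraMap]
    exact hMaev
  have hfMq : f ∣ Mq := minpoly.dvd ℚ β hMqaev
  -- degree of f is at least m
  have hminγ : minpoly ℚ γ = N.map (algebraMap ℤ ℚ) :=
    minpoly.isIntegrallyClosed_eq_field_fractions' ℚ hγint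
  have hminγdeg : (minpoly ℚ γ).natDegree = m := by
    rw [hminγ, Polynomial.natDegree_map_eq_of_injective (algebraMap ℤ ℚ).injective_int]
  have hfne : f ≠ 0 := minpoly.ne_zero hβQ
  set g : Polynomial ℚ := f.comp (C (2⁻¹ : ℚ) * X) with hg
  have hgdeg1 : (C (2⁻¹:ℚ) * X).natDegree = 1 := Polynomial.natDegree_C_mul_X _ (by norm_num)
  have hgne : g ≠ 0 := by
    have hlc : g.leadingCoeff = f.leadingCoeff * (2⁻¹:ℚ) ^ f.natDegree := by
      rw [hg, Polynomial.leadingCoeff_comp (by rw [hgdeg1]; norm_num)]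
      congr 1
      rw [Polynomial.leadingCoeff, hgdeg1]
      simp
    have : g.leadingCoeff ≠ 0 := by
      rw [hlc]
      exact mul_ne_zero (Polynomial.leadingCoeff_ne_zero.mpr hfne) (by positivity)
    exact fun h0 => this (by rw [h0]; simp)
  have hgaev : Polynomial.aeval γ g = 0 := by
    rw [hg, Polynomial.aeval_comp]
    have : Polynomial.aeval γ (C (2⁻¹:ℚ) * X) = β := by
      rw [hβγ]; simp
    rw [this]
    exact minpoly.aeval ℚ β
  have hfdegge : m ≤ f.natDegree := by
    have hdvd := minpoly.dvd ℚ γ hgaev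
    have := Polynomial.natDegree_le_of_dvd hdvd hgne
    rw [hminγdeg] at this
    rw [hg, Polynomial.natDegree_comp, hgdeg1, mul_one] at this
    exact this
  -- Mq = f * constant
  obtain ⟨u, hu⟩ := hfMq
  have hune : u ≠ 0 := by
    intro h0; rw [h0, mul_zero] at hu; exact hMqne hu
  have hudeg : u.natDegree = 0 := by
    have := congrArg Polynomial.natDegree hu
    rw [hMqdeg, Polynomial.natDegree_mul hfne hune] at this
    omega
  obtain ⟨a, ha, hau⟩ : ∃ a : ℚ, a ≠ 0 ∧ u = C a := by
    refine ⟨u.coeff 0, ?_, Polynomial.eq_C_of_natDegree_le_zero (le_of_eq hudeg)⟩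
    intro h0
    exact hune (by rw [Polynomial.eq_C_of_natDegree_le_zero (le_of_eq hudeg), h0, map_zero])
  -- Mq ∣ P.primPart mapped
  have hPne : P ≠ 0 := by
    intro h0; rw [h0] at hc0; simp at hc0
  have hPq : Polynomial.aeval β (P.primPart.map (Int.castRingHom ℚ)) = 0 := by
    rw [hcastalg, Polynomial.aeval_map_algebraMap]
    have hP := P.eq_C_content_mul_primPart
    have : Polynomial.aeval β P
        = (algebraMap ℤ ℝ) P.content * Polynomial.aeval β P.primPart := by
      conv_lhs => rw [hP]
      simp
    rw [haP] at this
    have hcne : ((algebraMap ℤ ℝ) P.content) ≠ 0 := by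
      simp only [algebraMap_int_eq, eq_intCast, Ne, Int.cast_eq_zero]
      exact fun h => hPne (Polynomial.content_eq_zero_iff.mp h)
    rcases mul_eq_zero.mp this.symm with h | h
    · exact absurd h hcne
    · exact h
  have hfPq : f ∣ P.primPart.map (Int.castRingHom ℚ) := minpoly.dvd ℚ β hPq
  have hMqdvd : Mq ∣ P.primPart.map (Int.castRingHom ℚ) := by
    have hfMq' : f = Mq * C a⁻¹ := by
      rw [hu, hau, mul_assoc, ← Polynomial.C_mul, mul_inv_cancel₀ ha, Polynomial.C_1, mul_one]
    obtain ⟨v, hv⟩ := hfPq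
    exact ⟨C a⁻¹ * v, by rw [hv, hfMq']; ring⟩
  have hMP : M ∣ P := by
    have := (Polynomial.IsPrimitive.Int.dvd_iff_map_cast_dvd_map_cast M P.primPart hMprim
      ).mpr hMqdvd
    exact this.trans P.primPart_dvd
  -- contradiction via leading coefficient
  obtain ⟨Q, hQ⟩ := hMP
  have hQne : Q ≠ 0 := by
    intro h0; rw [h0, mul_zero] at hQ; exact hPne hQ
  have hlP : P.leadingCoeff = 2 ^ m * Q.leadingCoeff := by
    rw [hQ, Polynomial.leadingCoeff_mul, hMlead]
  have hQl : 1 ≤ |Q.leadingCoeff| := Int.one_le_abs (Polynomial.leadingCoeff_ne_zero.mpr hQne)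
  have h4 : (4:ℤ) ≤ 2 ^ m := by
    calc (4:ℤ) = 2 ^ 2 := by norm_num
    _ ≤ 2 ^ m := pow_le_pow_right₀ (by norm_num) hm2
  have := hbd P.natDegree
  rw [← Polynomial.leadingCoeff] at this
  rw [hlP, abs_mul, abs_pow] at this
  have : (4:ℤ) ≤ 2 := by
    calc (4:ℤ) ≤ 2 ^ m := h4
    _ = 2 ^ m * 1 := by ring
    _ ≤ |(2:ℤ)| ^ m * |Q.leadingCoeff| := by
        apply mul_le_mul _ hQl (by norm_num) (by positivity)
        simp
    _ ≤ 2 := this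
  omega


private lemma slap_dyn (β : ℝ) (hβ0 : β ≠ 0) (n : ℕ) :
    ∃ p : Polynomial ℤ,
      (∀ i, p.coeff i = 0 ∨ p.coeff i = 1 ∨ p.coeff i = -1) ∧
      p.coeff 0 = 0 ∧
      (n ≠ 0 → p.coeff 1 = 1 ∨ p.coeff 1 = -1) ∧
      p.natDegree ≤ n ∧
      2 * β ^ n * ((slapMap β)^[n] (1 / 2) - 1 / 2) = Polynomial.aeval β p := by
  induction n with
  | zero => exact ⟨0, by simp, by simp, by simp, by simp, by simp⟩
  | succ n ih =>
    obtain ⟨p, hco, hc0, hc1, hdeg, hev⟩ := ih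
    set s : ℝ := (slapMap β)^[n] (1/2) with hs
    set e : ℤ := if (1:ℝ)/2 ≤ s then 1 else -1 with he
    refine ⟨-p + C e * X ^ (n+1), ?_, ?_, ?_, ?_, ?_⟩
    · intro i
      rcases eq_or_ne i (n+1) with rfl | hi
      · have hpz : p.coeff (n+1) = 0 :=
          Polynomial.coeff_eq_zero_of_natDegree_lt (by omega)
        rw [Polynomial.coeff_add, Polynomial.coeff_neg, hpz, neg_zero, zero_add,
          Polynomial.coeff_C_mul, Polynomial.coeff_X_pow, if_pos rfl, mul_one]
        rcases ite_eq_or_eq ((1:ℝ)/2 ≤ s) 1 (-1) with h | h <;> rw [he, h] <;> simp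
      · rw [Polynomial.coeff_add, Polynomial.coeff_neg, Polynomial.coeff_C_mul,
          Polynomial.coeff_X_pow, if_neg hi, mul_zero, add_zero]
        rcases hco i with h | h | h <;> rw [h] <;> simp
    · rw [Polynomial.coeff_add, Polynomial.coeff_neg, hc0, neg_zero, zero_add,
        Polynomial.coeff_C_mul, Polynomial.coeff_X_pow, if_neg (by omega), mul_zero]
    · intro _
      rcases Nat.eq_zero_or_pos n with rfl | hn
      · have hp1 : p.coeff 1 = 0 := by
          rcases eq_or_ne (p.coeff 1) 0 with h | h
          · exact h
          · exact absurd (Polynomial.le_natDegree_of_ne_zero h) (by omega)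
        rw [Polynomial.coeff_add, Polynomial.coeff_neg, hp1, neg_zero, zero_add,
          Polynomial.coeff_C_mul, Polynomial.coeff_X_pow, if_pos rfl, mul_one]
        rcases ite_eq_or_eq ((1:ℝ)/2 ≤ s) 1 (-1) with h | h <;> rw [he, h] <;> simp
      · rw [Polynomial.coeff_add, Polynomial.coeff_neg, Polynomial.coeff_C_mul,
          Polynomial.coeff_X_pow, if_neg (by omega), mul_zero, add_zero]
        rcases hc1 (by omega) with h | h <;> rw [h] <;> simp
    · refine le_trans (Polynomial.natDegree_add_le _ _) ?_
      simp only [Polynomial.natDegree_neg]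
      refine max_le (by omega) ?_
      exact le_trans (Polynomial.natDegree_C_mul_le _ _) (by simp)
    · rw [Function.iterate_succ_apply', ← hs]
      have heps : slapEps s = if (1:ℝ)/2 ≤ s then 1 else 0 := rfl
      have hee : (e : ℝ) = 2 * slapEps s - 1 := by
        rw [he, heps]
        split_ifs <;> norm_num
      rw [map_add, map_neg, map_mul, Polynomial.aeval_C, map_pow, Polynomial.aeval_X, ← hev]
      show 2 * β ^ (n+1) * (slapMap β s - 1/2)
          = -(2 * β ^ n * (s - 1/2)) + (e:ℝ) * β ^ (n+1)
      rw [slapMap, hee]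
      field_simp
      ring

/-- For an odd `d ≥ 5` and `β = cos (π/d)`, the point `s = 1/2` is not pre-periodic
under the reduced slap map: there is no pair `n > k ≥ 0` with `φ₀ⁿ(1/2) = φ₀ᵏ(1/2)`. -/
theorem slap_half_not_preperiodic (d : ℕ) (hd : Odd d) (hd5 : 5 ≤ d) (β : ℝ)
    (hβ : β = Real.cos (π / d)) :
    ∀ n k : ℕ, k < n → (slapMap β)^[n] (1 / 2) ≠ (slapMap β)^[k] (1 / 2) := by
  intro n k hkn heq
  have hπpos := Real.pi_pos
  have hdpos : (0:ℝ) < d := by positivity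
  have hd3 : (3:ℝ) < d := by exact_mod_cast (by omega : 3 < d)
  have hβgt : 1/2 < β := by
    rw [hβ]
    calc (1:ℝ)/2 = Real.cos (π/3) := Real.cos_pi_div_three.symm
      _ < Real.cos (π/d) := by
          apply Real.cos_lt_cos_of_nonneg_of_le_pi (by positivity) (by linarith)
          rw [div_lt_div_iff₀ hdpos (by norm_num)]
          nlinarith
  have hβlt : β < 1 := by
    rw [hβ]
    calc Real.cos (π/d) < Real.cos 0 := by
          apply Real.cos_lt_cos_of_nonneg_of_le_pi le_rfl ?_ (by positivity)
          rw [div_le_iff₀ hdpos]; nlinarith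
      _ = 1 := Real.cos_zero
  have hβ0 : β ≠ 0 := by linarith
  obtain ⟨hγint, hγinv⟩ := twoCos_int d hd hd5
  set γ : ℝ := 2 * Real.cos (π/d) with hγdef
  have hγβ : β = γ / 2 := by rw [hβ, hγdef]; ring
  have h1γ : 1 < γ := by rw [hγdef, ← hβ]; linarith
  have h2γ : γ < 2 := by rw [hγdef, ← hβ]; linarith
  have hγ0 : γ ≠ 0 := by linarith
  have hcu := minpoly_coeff_zero_unit hγint hγ0 hγinv
  have hm2 := minpoly_deg_two_le hγint h1γ h2γ
  -- dynamics
  obtain ⟨pn, hcoN, hc0N, hc1N, hdegN, hevN⟩ := slap_dyn β hβ0 n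
  obtain ⟨pk, hcoK, hc0K, hc1K, hdegK, hevK⟩ := slap_dyn β hβ0 k
  set e : ℕ := n - k with he
  have he1 : 1 ≤ e := by omega
  set q : Polynomial ℤ := pn - pk * X ^ e with hq
  have hpow : β ^ k * β ^ e = β ^ n := by
    rw [← pow_add]; congr 1; omega
  have haq : Polynomial.aeval β q = 0 := by
    rw [hq, map_sub, map_mul, map_pow, Polynomial.aeval_X, ← hevN, ← hevK]
    rw [heq]
    calc 2 * β ^ n * ((slapMap β)^[k] (1/2) - 1/2)
        - 2 * β ^ k * ((slapMap β)^[k] (1/2) - 1/2) * β ^ e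
        = 2 * β ^ n * ((slapMap β)^[k] (1/2) - 1/2)
          - 2 * (β ^ k * β ^ e) * ((slapMap β)^[k] (1/2) - 1/2) := by ring
      _ = 0 := by rw [hpow]; ring
  have hq0 : q.coeff 0 = 0 := by
    rw [hq, Polynomial.coeff_sub, hc0N, Polynomial.coeff_mul_X_pow',
      if_neg (by omega), sub_zero]
  have hKco : ∀ i, (pk * X ^ e).coeff i = 0 ∨ (pk * X ^ e).coeff i = 1 ∨
      (pk * X ^ e).coeff i = -1 := by
    intro i
    rw [Polynomial.coeff_mul_X_pow']
    split_ifs with h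
    · exact hcoK _
    · exact Or.inl rfl
  have hq1 : q.coeff 1 = pn.coeff 1 := by
    rw [hq, Polynomial.coeff_sub, Polynomial.coeff_mul_X_pow']
    split_ifs with h
    · have he' : e = 1 := by omega
      rw [he', show 1 - 1 = 0 from rfl, hc0K, sub_zero]
    · rw [sub_zero]
  -- pass to divX
  have hdc0 : q.divX.coeff 0 = 1 ∨ q.divX.coeff 0 = -1 := by
    rw [Polynomial.coeff_divX, hq1]
    exact hc1N (by omega)
  have hdbd : ∀ i, |q.divX.coeff i| ≤ 2 := by
    intro i
    rw [Polynomial.coeff_divX, hq, Polynomial.coeff_sub]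
    rcases hcoN (i+1) with h | h | h <;> rcases hKco (i+1) with g | g | g <;>
      rw [h, g] <;> norm_num
  have hdaev : Polynomial.aeval β q.divX = 0 := by
    have hx := q.divX_mul_X_add
    have h0 : Polynomial.aeval β (q.divX * X + C (q.coeff 0)) = 0 := by rw [hx]; exact haq
    rw [map_add, map_mul, Polynomial.aeval_X, Polynomial.aeval_C, hq0, map_zero,
      add_zero] at h0
    rcases mul_eq_zero.mp h0 with h | h
    · exact h
    · exact absurd h hβ0
  exact slap_core hγβ hγint hγinv h1γ h2γ hcu hm2 q.divX hdc0 hdbd hdaev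
end

section
/- Let F(x) ∈ ℤ[x] be a polynomial with coefficients in {-2,-1,0,1,2}, with F(0) = ±1 and leading coefficient in {±1, ±2}. Let p(x) ∈ ℤ[x] be a polynomial with constant term ±1 and leading coefficient ≥ 4. Then p does not divide F in ℚ[x] (unless F = 0). -/
open Polynomial

lemma prim_of_const_unit {q : Polynomial ℤ} (h : q.coeff 0 = 1 ∨ q.coeff 0 = -1) :
    q.IsPrimitive := by
  intro r hr
  have := (C_dvd_iff_dvd_coeff r q).mp hr 0
  rcases h with h | h <;> rw [h] at this <;>
    [exact isUnit_of_dvd_one this;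
     exact isUnit_of_dvd_one ((dvd_neg).mpr this)]

/-- Divisibility obstruction: a polynomial `F ∈ ℤ[x]` with coefficients in
`{-2,-1,0,1,2}`, constant term `±1` and leading coefficient in `{±1, ±2}` cannot be
divisible in `ℚ[x]` by a polynomial `p ∈ ℤ[x]` with constant term `±1` and leading
coefficient at least `4`. -/
theorem no_small_multiple (F p : Polynomial ℤ)
    (hFcoeff : ∀ i, F.coeff i ∈ ({-2, -1, 0, 1, 2} : Set ℤ))
    (hF0 : F.coeff 0 = 1 ∨ F.coeff 0 = -1)
    (hFlead : F.leadingCoeff ∈ ({-2, -1, 1, 2} : Set ℤ))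
    (hp0 : p.coeff 0 = 1 ∨ p.coeff 0 = -1)
    (hplead : 4 ≤ p.leadingCoeff) :
    ¬ (p.map (Int.castRingHom ℚ) ∣ F.map (Int.castRingHom ℚ)) := by
  intro hdvd
  have hdvdZ : p ∣ F :=
    (IsPrimitive.Int.dvd_iff_map_cast_dvd_map_cast p F (prim_of_const_unit hp0)
      ).mpr hdvd
  obtain ⟨S, hS⟩ := hdvdZ
  have hFne : F ≠ 0 := by
    intro h
    rcases hF0 with h0 | h0 <;> simp [h] at h0
  have hSne : S ≠ 0 := by rintro rfl; simp at hS; exact hFne hS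
  have hpne : p ≠ 0 := by rintro rfl; simp at hS; exact hFne hS
  have hlead : F.leadingCoeff = p.leadingCoeff * S.leadingCoeff := by
    rw [hS, leadingCoeff_mul]
  have hSlead : S.leadingCoeff ≠ 0 := leadingCoeff_ne_zero.mpr hSne
  have h1 : 1 ≤ |S.leadingCoeff| := by have := abs_pos.mpr hSlead; omega
  have h4 : 4 ≤ |F.leadingCoeff| := by
    rw [hlead, abs_mul]
    calc (4:ℤ) = 4 * 1 := by ring
    _ ≤ |p.leadingCoeff| * |S.leadingCoeff| := by
        apply mul_le_mul _ h1 (by norm_num) (abs_nonneg _)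
        exact le_trans hplead (le_abs_self _)
  rcases hFlead with h | h | h | h <;> rw [h] at h4 <;> norm_num at h4
end

section
/- Every periodic point of period two of the contracting polygonal billiard map is parabolic: if (s₀, θ₀) has Φ²(s₀,θ₀) = (s₀,θ₀) with two distinct collisions, then θ₀ = 0, the corresponding trajectory hits two parallel sides perpendicularly, and the expansion factor α₂(s₀,θ₀) = ∏ cos θ_i / cos θ̄_{i+1} equals 1, so one eigenvalue of DΦ² has absolute value 1. -/
open Real

/-- Rotation by `π/2`: the inward unit normal to a side with unit tangent `u`. -/
def sideNormal (u : ℝ × ℝ) : ℝ × ℝ := (-u.2, u.1)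

/-- An orbit of a polygonal billiard with reflection law `f`, recorded through its
collision points `q i`, the unit tangent `u i` of the side at the `i`-th collision,
the post-collision unit velocity `v i`, the outgoing angle `θ i` and the incidence
angle `θbar i` of the `i`-th collision (for `i ≥ 1`).  The velocity satisfies
`v = sin θ · u + cos θ · Ju`, the incidence angle is the angle of the specularly
reflected incoming direction `-v + 2⟨u, v⟩u`, the reflection law gives `θ = f(θbar)`,
and retracing a segment backwards returns to the previous collision point. -/
structure BilliardOrbit (f : ℝ → ℝ) : Type where
  q : ℕ → ℝ × ℝ
  u : ℕ → ℝ × ℝ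
  v : ℕ → ℝ × ℝ
  θ : ℕ → ℝ
  θbar : ℕ → ℝ
  hu : ∀ i, (u i).1 ^ 2 + (u i).2 ^ 2 = 1
  hθ : ∀ i, θ i ∈ Set.Ioo (-(π / 2)) (π / 2)
  hθbar : ∀ i, θbar i ∈ Set.Ioo (-(π / 2)) (π / 2)
  hrefl : ∀ i, θ i = f (θbar i)
  hflight : ∀ i, ∃ t : ℝ, 0 < t ∧ q (i + 1) = q i + t • v i
  hv : ∀ i, v i = Real.sin (θ i) • u i + Real.cos (θ i) • sideNormal (u i)
  hincid : ∀ i,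
    -(v i) + (2 * ((u (i + 1)).1 * (v i).1 + (u (i + 1)).2 * (v i).2)) • u (i + 1) =
      Real.sin (θbar (i + 1)) • u (i + 1) + Real.cos (θbar (i + 1)) • sideNormal (u (i + 1))
  hback : ∀ i, v (i + 1) = -(v i) → q (i + 2) = q i

lemma aux_incid (a b s c sb cb w1 w2 : ℝ) (hab : a^2 + b^2 = 1)
    (hw1 : w1 = -(s*a - c*b)) (hw2 : w2 = -(s*b + c*a))
    (e1 : -w1 + (2*(a*w1 + b*w2))*a = sb*a + cb*(-b))
    (e2 : -w2 + (2*(a*w1 + b*w2))*b = sb*b + cb*a) : sb = -s := by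
  subst hw1; subst hw2
  linear_combination (-a)*e1 - b*e2 - (sb + s + 2*s*(a^2+b^2))*hab

lemma aux_sb (a b s c sb cb : ℝ) (hab : a^2+b^2 = 1)
    (e1 : -(s*a) - c*b = sb*a - cb*b) (e2 : -(s*b) + c*a = sb*b + cb*a) : sb = -s := by
  linear_combination (-a)*e1 - b*e2 - (sb+s)*hab

lemma aux_theta (f : ℝ → ℝ) (lam : ℝ) (hlam1 : lam < 1)
    (hfc : ∀ x : ℝ, |x| < π / 2 → |f x| ≤ lam * |x|)
    (x : ℝ) (hx : x ∈ Set.Ioo (-(π/2)) (π/2)) (hfix : x = f (-x)) : x = 0 := by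
  have hax : |x| < π / 2 := abs_lt.2 ⟨hx.1, hx.2⟩
  have h1 : |f (-x)| ≤ lam * |(-x)| := hfc (-x) (by rwa [abs_neg])
  rw [← hfix, abs_neg] at h1
  have : (1 - lam) * |x| ≤ 0 := by nlinarith
  have : |x| ≤ 0 := by nlinarith [abs_nonneg x]
  exact abs_eq_zero.1 (le_antisymm this (abs_nonneg x))

/-- Period-two orbits of a contracting polygonal billiard are parabolic: the two
collisions are perpendicular (`θ₀ = 0` and all incidence angles vanish), the two sides
are parallel, the expansion factor `α₂ = (cos θ₀ / cos θ̄₂)(cos θ₁ / cos θ̄₁)` is `1`,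
and hence `DΦ² = [[α₂, γ],[0, β]]` has an eigenvalue of absolute value `1`. -/
theorem period_two_parabolic (f : ℝ → ℝ) (lam : ℝ)
    (hlam0 : 0 ≤ lam) (hlam1 : lam < 1) (hf0 : f 0 = 0)
    (hfc : ∀ x : ℝ, |x| < π / 2 → |f x| ≤ lam * |x|)
    (O : BilliardOrbit f)
    (hper : ∀ i, O.q (i + 2) = O.q i ∧ O.v (i + 2) = O.v i ∧ O.u (i + 2) = O.u i ∧
      O.θ (i + 2) = O.θ i ∧ O.θbar (i + 2) = O.θbar i)
    (hdist : O.q 1 ≠ O.q 0) :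
    O.θ 0 = 0 ∧ O.θ 1 = 0 ∧ O.θbar 1 = 0 ∧ O.θbar 2 = 0 ∧
    (O.u 1 = O.u 0 ∨ O.u 1 = -(O.u 0)) ∧
    (Real.cos (O.θ 0) / Real.cos (O.θbar 2)) * (Real.cos (O.θ 1) / Real.cos (O.θbar 1)) = 1 ∧
    (∀ γ β : ℝ, ∃ w : Fin 2 → ℝ, w ≠ 0 ∧
      Matrix.mulVec
        !![(Real.cos (O.θ 0) / Real.cos (O.θbar 2)) *
            (Real.cos (O.θ 1) / Real.cos (O.θbar 1)), γ; 0, β] w = w) := by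
  -- component form of velocities
  have hvcomp : ∀ i, O.v i = (Real.sin (O.θ i) * (O.u i).1 - Real.cos (O.θ i) * (O.u i).2,
      Real.sin (O.θ i) * (O.u i).2 + Real.cos (O.θ i) * (O.u i).1) := by
    intro i
    rw [O.hv i]
    simp only [sideNormal, Prod.ext_iff, Prod.fst_add, Prod.snd_add, Prod.smul_fst,
      Prod.smul_snd, smul_eq_mul]
    exact ⟨by ring, trivial⟩
  -- unit speed
  have hvunit : ∀ i, (O.v i).1 ^ 2 + (O.v i).2 ^ 2 = 1 := by
    intro i
    rw [hvcomp i]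
    dsimp only
    have h1 := O.hu i
    have h2 := Real.sin_sq_add_cos_sq (O.θ i)
    nlinarith [h1, h2]
  -- v 1 = -(v 0)
  obtain ⟨t0, ht0, h1⟩ := O.hflight 0
  obtain ⟨t1, ht1, h2⟩ := O.hflight 1
  have hq2 : O.q 2 = O.q 0 := (hper 0).1
  norm_num at h1 h2
  have hsum : t0 • O.v 0 + t1 • O.v 1 = 0 := by
    have h : O.q 0 + (t0 • O.v 0 + t1 • O.v 1) = O.q 0 + 0 := by
      rw [add_zero, ← add_assoc, ← h1, ← h2, hq2]
    exact add_left_cancel h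
  have hsum1 : t0 * (O.v 0).1 + t1 * (O.v 1).1 = 0 := by
    have := congrArg Prod.fst hsum
    simpa [smul_eq_mul] using this
  have hsum2 : t0 * (O.v 0).2 + t1 * (O.v 1).2 = 0 := by
    have := congrArg Prod.snd hsum
    simpa [smul_eq_mul] using this
  have ht01 : t1 = t0 := by
    have e0 := hvunit 0
    have e1 := hvunit 1
    have hsq : t1^2 = t0^2 := by
      linear_combination (-(t1^2)) * e1 + t0^2 * e0 +
        (t1*(O.v 1).1 - t0*(O.v 0).1) * hsum1 + (t1*(O.v 1).2 - t0*(O.v 0).2) * hsum2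
    nlinarith [hsq, ht0, ht1]
  have hvneg : O.v 1 = -(O.v 0) := by
    subst ht01
    have hne : t1 ≠ 0 := ne_of_gt ht1
    have c1 : (O.v 1).1 = -(O.v 0).1 := by
      rcases mul_eq_zero.mp (show t1 * ((O.v 0).1 + (O.v 1).1) = 0 by linear_combination hsum1)
        with h | h
      · exact absurd h hne
      · linarith
    have c2 : (O.v 1).2 = -(O.v 0).2 := by
      rcases mul_eq_zero.mp (show t1 * ((O.v 0).2 + (O.v 1).2) = 0 by linear_combination hsum2)
        with h | h
      · exact absurd h hne
      · linarith
    exact Prod.ext c1 c2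
  -- incidence at the first side: θbar 1 = -(θ 1)
  have hi0 := O.hincid 0
  norm_num at hi0
  have hw1 : (O.v 0).1 = -(Real.sin (O.θ 1) * (O.u 1).1 - Real.cos (O.θ 1) * (O.u 1).2) := by
    have h := congrArg Prod.fst hvneg
    rw [hvcomp 1] at h
    dsimp at h
    linarith [h]
  have hw2 : (O.v 0).2 = -(Real.sin (O.θ 1) * (O.u 1).2 + Real.cos (O.θ 1) * (O.u 1).1) := by
    have h := congrArg Prod.snd hvneg
    rw [hvcomp 1] at h
    dsimp at h
    linarith [h]
  have e1 : -(O.v 0).1 + (2 * ((O.u 1).1 * (O.v 0).1 + (O.u 1).2 * (O.v 0).2)) * (O.u 1).1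
      = Real.sin (O.θbar 1) * (O.u 1).1 + Real.cos (O.θbar 1) * (-(O.u 1).2) := by
    have h := congrArg Prod.fst hi0
    simpa [sideNormal, smul_eq_mul] using h
  have e2 : -(O.v 0).2 + (2 * ((O.u 1).1 * (O.v 0).1 + (O.u 1).2 * (O.v 0).2)) * (O.u 1).2
      = Real.sin (O.θbar 1) * (O.u 1).2 + Real.cos (O.θbar 1) * (O.u 1).1 := by
    have h := congrArg Prod.snd hi0
    simpa [sideNormal, smul_eq_mul] using h
  have hsb1 : Real.sin (O.θbar 1) = -(Real.sin (O.θ 1)) :=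
    aux_incid ((O.u 1).1) ((O.u 1).2) (Real.sin (O.θ 1)) (Real.cos (O.θ 1))
      (Real.sin (O.θbar 1)) (Real.cos (O.θbar 1)) ((O.v 0).1) ((O.v 0).2)
      (O.hu 1) hw1 hw2 (by linear_combination e1) (by linear_combination e2)
  -- incidence at the second side: θbar 2 = -(θ 0)
  have hu20 : O.u 2 = O.u 0 := (hper 0).2.2.1
  have hi1 := O.hincid 1
  norm_num [hu20] at hi1
  have hw1' : (O.v 1).1 = -(Real.sin (O.θ 0) * (O.u 0).1 - Real.cos (O.θ 0) * (O.u 0).2) := by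
    have h := congrArg Prod.fst hvneg
    rw [hvcomp 0] at h
    dsimp at h
    linarith [h]
  have hw2' : (O.v 1).2 = -(Real.sin (O.θ 0) * (O.u 0).2 + Real.cos (O.θ 0) * (O.u 0).1) := by
    have h := congrArg Prod.snd hvneg
    rw [hvcomp 0] at h
    dsimp at h
    linarith [h]
  have e1' : -(O.v 1).1 + (2 * ((O.u 0).1 * (O.v 1).1 + (O.u 0).2 * (O.v 1).2)) * (O.u 0).1
      = Real.sin (O.θbar 2) * (O.u 0).1 + Real.cos (O.θbar 2) * (-(O.u 0).2) := by
    have h := congrArg Prod.fst hi1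
    simpa [sideNormal, smul_eq_mul] using h
  have e2' : -(O.v 1).2 + (2 * ((O.u 0).1 * (O.v 1).1 + (O.u 0).2 * (O.v 1).2)) * (O.u 0).2
      = Real.sin (O.θbar 2) * (O.u 0).2 + Real.cos (O.θbar 2) * (O.u 0).1 := by
    have h := congrArg Prod.snd hi1
    simpa [sideNormal, smul_eq_mul] using h
  have hsb2 : Real.sin (O.θbar 2) = -(Real.sin (O.θ 0)) :=
    aux_incid ((O.u 0).1) ((O.u 0).2) (Real.sin (O.θ 0)) (Real.cos (O.θ 0))
      (Real.sin (O.θbar 2)) (Real.cos (O.θbar 2)) ((O.v 1).1) ((O.v 1).2)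
      (O.hu 0) hw1' hw2' (by linear_combination e1') (by linear_combination e2')
  -- from sin equality to angle equality
  have hmem : ∀ i, O.θ i ∈ Set.Icc (-(π/2)) (π/2) := fun i =>
    ⟨le_of_lt (O.hθ i).1, le_of_lt (O.hθ i).2⟩
  have hmemb : ∀ i, O.θbar i ∈ Set.Icc (-(π/2)) (π/2) := fun i =>
    ⟨le_of_lt (O.hθbar i).1, le_of_lt (O.hθbar i).2⟩
  have hmemneg : ∀ i, -(O.θ i) ∈ Set.Icc (-(π/2)) (π/2) := fun i => by
    have h := O.hθ i
    exact ⟨by linarith [h.2], by linarith [h.1]⟩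
  have hb1 : O.θbar 1 = -(O.θ 1) := by
    apply Real.injOn_sin (hmemb 1) (hmemneg 1)
    rw [Real.sin_neg]; exact hsb1
  have hb2 : O.θbar 2 = -(O.θ 0) := by
    apply Real.injOn_sin (hmemb 2) (hmemneg 0)
    rw [Real.sin_neg]; exact hsb2
  -- the angles vanish
  have hθ1z : O.θ 1 = 0 := by
    apply aux_theta f lam hlam1 hfc _ (O.hθ 1)
    rw [← hb1]; exact O.hrefl 1
  have hθ0z : O.θ 0 = 0 := by
    apply aux_theta f lam hlam1 hfc _ (O.hθ 0)
    rw [← hb2]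
    rw [← (hper 0).2.2.2.1]
    exact O.hrefl 2
  have hb1z : O.θbar 1 = 0 := by rw [hb1, hθ1z, neg_zero]
  have hb2z : O.θbar 2 = 0 := by rw [hb2, hθ0z, neg_zero]
  -- parallel sides
  have hupar : O.u 1 = -(O.u 0) := by
    have h1' := hw1'
    have h2' := hw2'
    rw [hvcomp 1, hθ0z, hθ1z] at h1' h2'
    simp at h1' h2'
    refine Prod.ext ?_ ?_ <;> simp only [Prod.fst_neg, Prod.snd_neg] <;> linarith
  -- expansion factor
  have hexp : (Real.cos (O.θ 0) / Real.cos (O.θbar 2)) *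
      (Real.cos (O.θ 1) / Real.cos (O.θbar 1)) = 1 := by
    rw [hθ0z, hθ1z, hb1z, hb2z, Real.cos_zero]
    norm_num
  refine ⟨hθ0z, hθ1z, hb1z, hb2z, Or.inr hupar, hexp, ?_⟩
  intro γ β
  refine ⟨![1, 0], ?_, ?_⟩
  · intro h
    have := congrFun h 0
    simp at this
  · funext i
    fin_cases i <;>
      simp [Matrix.mulVec, dotProduct, hexp]
end

section
/- Every periodic point of a contracting polygonal billiard of period n > 2 is hyperbolic: if (s₀, θ₀) is periodic of period n > 2, then at least two of the collision angles θ̄_i are nonzero, hence α_n(s₀,θ₀) = ∏_{i=1}^{n} ρ(θ̄_i) > 1, and the orbit is uniformly hyperbolic with eigenvalues α_n > 1 and |β_n| ≤ λⁿ < 1 for DΦⁿ. -/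
open Real Finset

private lemma periodic_ext {α : Type*} {n : ℕ} (g : ℕ → α) (h : ∀ i, g (i + n) = g i) :
    ∀ (s i : ℕ), g (i + s * n) = g i := by
  intro s
  induction s with
  | zero => simp
  | succ s ih =>
    intro i
    have he : i + (s + 1) * n = (i + s * n) + n := by ring
    rw [he, h, ih]

private lemma rho_one_le {f : ℝ → ℝ} {lam θ : ℝ} (hlam1 : lam < 1)
    (hfc : ∀ x : ℝ, |x| < π / 2 → |f x| ≤ lam * |x|) (hθ : |θ| < π / 2) :
    1 ≤ Real.cos (f θ) / Real.cos θ := by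
  have hπ := Real.pi_pos
  have hc : 0 < Real.cos θ := Real.cos_pos_of_mem_Ioo (Set.mem_Ioo.mpr (abs_lt.mp hθ))
  have h1 : |f θ| ≤ |θ| := (hfc θ hθ).trans (mul_le_of_le_one_left (abs_nonneg θ) hlam1.le)
  have h2 : Real.cos |θ| ≤ Real.cos |f θ| :=
    Real.cos_le_cos_of_nonneg_of_le_pi (abs_nonneg _) (by linarith) h1
  rw [Real.cos_abs, Real.cos_abs] at h2
  exact (one_le_div hc).mpr h2

private lemma rho_one_lt {f : ℝ → ℝ} {lam θ : ℝ} (hlam1 : lam < 1)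
    (hfc : ∀ x : ℝ, |x| < π / 2 → |f x| ≤ lam * |x|) (hθ : |θ| < π / 2) (hθ0 : θ ≠ 0) :
    1 < Real.cos (f θ) / Real.cos θ := by
  have hπ := Real.pi_pos
  have hc : 0 < Real.cos θ := Real.cos_pos_of_mem_Ioo (Set.mem_Ioo.mpr (abs_lt.mp hθ))
  have hpos : 0 < |θ| := abs_pos.mpr hθ0
  have h1 : |f θ| < |θ| := by
    have := mul_lt_mul_of_pos_right hlam1 hpos
    have h := hfc θ hθ
    nlinarith
  have h2 : Real.cos |θ| < Real.cos |f θ| :=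
    Real.cos_lt_cos_of_nonneg_of_le_pi (abs_nonneg _) (by linarith) h1
  rw [Real.cos_abs, Real.cos_abs] at h2
  exact (one_lt_div hc).mpr h2

/-- If the incidence angle of the `(i+1)`-st collision vanishes, the orbit is reflected
straight back. -/
private lemma flip_of_zero {f : ℝ → ℝ} (hf0 : f 0 = 0) (O : BilliardOrbit f) {i : ℕ}
    (hz : O.θbar (i + 1) = 0) : O.v (i + 1) = -(O.v i) := by
  have hE := O.hincid i
  have hu := O.hu (i + 1)
  rw [hz, Real.sin_zero, Real.cos_zero, zero_smul, one_smul, zero_add] at hE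
  have hc : (O.u (i + 1)).1 * (O.v i).1 + (O.u (i + 1)).2 * (O.v i).2 = 0 := by
    have h1 := congrArg Prod.fst hE
    have h2 := congrArg Prod.snd hE
    simp only [Prod.fst_add, Prod.snd_add, Prod.smul_fst, Prod.smul_snd, Prod.fst_neg,
      Prod.snd_neg, smul_eq_mul, sideNormal] at h1 h2
    linear_combination (O.u (i + 1)).1 * h1 + (O.u (i + 1)).2 * h2 -
      (2 * ((O.u (i + 1)).1 * (O.v i).1 + (O.u (i + 1)).2 * (O.v i).2)) * hu
  rw [hc, mul_zero, zero_smul, add_zero] at hE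
  have hθ1 : O.θ (i + 1) = 0 := by rw [O.hrefl, hz, hf0]
  have hv1 := O.hv (i + 1)
  rw [hθ1, Real.sin_zero, Real.cos_zero, zero_smul, one_smul, zero_add] at hv1
  rw [hv1, ← hE]

/-- The post-collision velocities are unit vectors. -/
private lemma vnorm {f : ℝ → ℝ} (O : BilliardOrbit f) (i : ℕ) :
    (O.v i).1 ^ 2 + (O.v i).2 ^ 2 = 1 := by
  have h := O.hv i
  have hu := O.hu i
  have h1 := congrArg Prod.fst h
  have h2 := congrArg Prod.snd h
  simp only [Prod.fst_add, Prod.snd_add, Prod.smul_fst, Prod.smul_snd, smul_eq_mul,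
    sideNormal] at h1 h2
  rw [h1, h2]
  nlinarith [Real.sin_sq_add_cos_sq (O.θ i), hu]

/-- Periodic orbits of period `n > 2` of a contracting polygonal billiard are
hyperbolic: at least two of the incidence angles `θ̄ᵢ` are nonzero, hence the
expansion factor `αₙ` equals `∏ᵢ ρ(θ̄ᵢ) > 1` where `ρ(θ) = cos (f θ) / cos θ`, while
`|βₙ| = |∏ᵢ f'(θ̄ᵢ)| ≤ λⁿ < 1`. -/
theorem period_n_hyperbolic (f f' : ℝ → ℝ) (lam : ℝ) (n : ℕ)
    (hn : 2 < n) (hlam0 : 0 ≤ lam) (hlam1 : lam < 1) (hf0 : f 0 = 0)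
    (hfc : ∀ x : ℝ, |x| < π / 2 → |f x| ≤ lam * |x|)
    (hfd : ∀ x : ℝ, |x| < π / 2 → HasDerivAt f (f' x) x)
    (hfd' : ∀ x : ℝ, |x| < π / 2 → |f' x| ≤ lam)
    (O : BilliardOrbit f)
    (hper : ∀ i, O.q (i + n) = O.q i ∧ O.v (i + n) = O.v i ∧ O.u (i + n) = O.u i ∧
      O.θ (i + n) = O.θ i ∧ O.θbar (i + n) = O.θbar i)
    (hmin : ∀ m : ℕ, 0 < m → m < n → ∃ i, O.q (i + m) ≠ O.q i ∨ O.v (i + m) ≠ O.v i) :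
    (∃ i ∈ Finset.Icc 1 n, ∃ j ∈ Finset.Icc 1 n, i ≠ j ∧ O.θbar i ≠ 0 ∧ O.θbar j ≠ 0) ∧
    (Real.cos (O.θ 0) / Real.cos (O.θbar n)) *
        ∏ i ∈ Finset.Ico 1 n, Real.cos (O.θ i) / Real.cos (O.θbar i) =
      ∏ i ∈ Finset.Icc 1 n, Real.cos (f (O.θbar i)) / Real.cos (O.θbar i) ∧
    1 < ∏ i ∈ Finset.Icc 1 n, Real.cos (f (O.θbar i)) / Real.cos (O.θbar i) ∧
    |∏ i ∈ Finset.Icc 1 n, f' (O.θbar i)| ≤ lam ^ n ∧ lam ^ n < 1 := by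
  have hnpos : 0 < n := by omega
  have habs : ∀ i, |O.θbar i| < π / 2 := fun i => abs_lt.mpr ⟨(O.hθbar i).1, (O.hθbar i).2⟩
  -- the two-nonzero-angle statement
  have key : ∃ i ∈ Finset.Icc 1 n, ∃ j ∈ Finset.Icc 1 n, i ≠ j ∧
      O.θbar i ≠ 0 ∧ O.θbar j ≠ 0 := by
    by_contra hcon
    push_neg at hcon
    have pv := periodic_ext O.v (fun i => (hper i).2.1)
    have pb := periodic_ext O.θbar (fun i => (hper i).2.2.2.2)
    have contra : (∀ i, O.v (i + 1) = -(O.v i)) → False := by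
      intro hflip
      obtain ⟨i, hi⟩ := hmin 2 (by omega) hn
      have hq2 : ∀ j, O.q (j + 2) = O.q j := fun j => O.hback j (hflip j)
      have hv2 : ∀ j, O.v (j + 2) = O.v j := fun j => by
        rw [show j + 2 = (j + 1) + 1 from rfl, hflip (j + 1), hflip j, neg_neg]
      rcases hi with h | h
      · exact h (hq2 i)
      · exact h (hv2 i)
    by_cases hk : ∃ k ∈ Finset.Icc 1 n, O.θbar k ≠ 0
    · obtain ⟨k, hkmem, hk0⟩ := hk
      have hk1 : 1 ≤ k := (Finset.mem_Icc.mp hkmem).1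
      have hkn : k ≤ n := (Finset.mem_Icc.mp hkmem).2
      have hzero : ∀ j ∈ Finset.Icc 1 n, j ≠ k → O.θbar j = 0 := fun j hj hjk =>
        hcon k hkmem j hj (fun h => hjk h.symm) hk0
      -- vanishing of all other angles in the window after `k`
      have hz : ∀ t, 1 ≤ t → t ≤ n - 1 → O.θbar (k + t) = 0 := by
        intro t ht1 ht2
        by_cases h : k + t ≤ n
        · exact hzero (k + t) (Finset.mem_Icc.mpr ⟨by omega, h⟩) (by omega)
        · have he : k + t = (k + t - n) + n := by omega
          rw [he, (hper _).2.2.2.2]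
          exact hzero _ (Finset.mem_Icc.mpr ⟨by omega, by omega⟩) (by omega)
      have hflipw : ∀ s, s + 1 ≤ n - 1 → O.v (k + s + 1) = -(O.v (k + s)) := by
        intro s hs
        apply flip_of_zero hf0 O
        have := hz (s + 1) (by omega) hs
        rwa [show k + (s + 1) = k + s + 1 from by omega] at this
      have hq2w : ∀ s, s + 2 ≤ n → O.q (k + s + 2) = O.q (k + s) := fun s hs =>
        O.hback (k + s) (hflipw s (by omega))
      rcases Nat.even_or_odd n with hev | hod
      · -- n even : all velocities flip, contradicting minimality of period
        have V : ∀ t, t ≤ n - 1 → O.v (k + t) = ((-1 : ℝ)) ^ t • O.v k := by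
          intro t
          induction t with
          | zero => simp
          | succ t ih =>
            intro h
            have h1 := hflipw t h
            rw [show k + (t + 1) = k + t + 1 from rfl, h1, ih (by omega), pow_succ,
              mul_smul]
            simp
        have hstep : ∀ s, s + 1 ≤ n → O.v (k + s + 1) = -(O.v (k + s)) := by
          intro s hsn
          rcases eq_or_lt_of_le hsn with he | h
          · rw [show k + s + 1 = k + n from by omega, (hper k).2.1,
              show s = n - 1 from by omega, V (n - 1) (le_refl _)]
            have hoddt : Odd (n - 1) := by
              rcases hev with ⟨m, hm⟩
              exact ⟨m - 1, by omega⟩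
            rw [Odd.neg_one_pow hoddt]
            simp
          · exact hflipw s (by omega)
        apply contra
        intro i
        set m := i + n - k with hm
        have e1 : O.v (k + m + 1) = O.v (i + 1) := by
          rw [show k + m + 1 = (i + 1) + n from by omega]
          exact (hper (i + 1)).2.1
        have e2 : O.v (k + m) = O.v i := by
          rw [show k + m = i + n from by omega]
          exact (hper i).2.1
        rw [← e1, ← e2]
        have hdm : m % n + (m / n) * n = m := by
          rw [mul_comm]; exact Nat.mod_add_div m n
        have hml : m % n < n := Nat.mod_lt m hnpos
        rw [show k + m + 1 = (k + m % n + 1) + (m / n) * n from by omega, pv,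
          show k + m = (k + m % n) + (m / n) * n from by omega, pv]
        exact hstep (m % n) (by omega)
      · -- n odd : the orbit would be a single segment traversed back and forth
        have hodd : ∀ m, 2 * m + 1 ≤ n → O.q (k + (2 * m + 1)) = O.q (k + 1) := by
          intro m
          induction m with
          | zero => simp
          | succ m ih =>
            intro h
            have h1 := hq2w (2 * m + 1) (by omega)
            rw [show k + (2 * (m + 1) + 1) = k + (2 * m + 1) + 2 from by omega, h1]
            exact ih (by omega)
        rcases hod with ⟨m, hm⟩
        have hq1 : O.q (k + 1) = O.q k := by
          have h1 := hodd m (by omega)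
          rw [show 2 * m + 1 = n from by omega] at h1
          rw [← h1]
          exact (hper k).1
        obtain ⟨t, ht, hf⟩ := O.hflight k
        rw [hq1] at hf
        have hvz : t • O.v k = 0 := by
          have := hf.symm
          rwa [add_eq_left] at this
        have hv0 : O.v k = 0 := by
          rcases smul_eq_zero.mp hvz with h | h
          · exact absurd h (ne_of_gt ht)
          · exact h
        have := vnorm O k
        rw [hv0] at this
        norm_num at this
    · push_neg at hk
      apply contra
      intro i
      apply flip_of_zero hf0 O
      have hml : i % n < n := Nat.mod_lt i hnpos
      have hdm : i % n + (i / n) * n = i := by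
        rw [mul_comm]; exact Nat.mod_add_div i n
      rw [show i + 1 = (i % n + 1) + (i / n) * n from by omega, pb]
      exact hk _ (Finset.mem_Icc.mpr ⟨by omega, by omega⟩)
  refine ⟨key, ?_, ?_, ?_, ?_⟩
  · -- the product identity
    have hθn0 : O.θ n = O.θ 0 := by
      have := (hper 0).2.2.2.1
      simpa using this
    rw [← Finset.Ico_add_one_right_eq_Icc,
      Finset.prod_Ico_succ_top (by omega : 1 ≤ n), mul_comm]
    congr 1
    · exact Finset.prod_congr rfl fun i _ => by rw [O.hrefl i]
    · rw [← hθn0, O.hrefl n]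
  · -- expansion factor exceeds 1
    obtain ⟨i, hi, j, hj, hij, hi0, hj0⟩ := key
    have h1 : 1 < Real.cos (f (O.θbar i)) / Real.cos (O.θbar i) :=
      rho_one_lt hlam1 hfc (habs i) hi0
    have h2 : (1 : ℝ) ≤ ∏ x ∈ (Finset.Icc 1 n).erase i,
        Real.cos (f (O.θbar x)) / Real.cos (O.θbar x) := by
      have := Finset.prod_le_prod (s := (Finset.Icc 1 n).erase i)
        (f := fun _ => (1 : ℝ)) (g := fun x => Real.cos (f (O.θbar x)) / Real.cos (O.θbar x))
        (fun _ _ => zero_le_one) (fun x _ => rho_one_le hlam1 hfc (habs x))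
      simpa using this
    rw [← Finset.mul_prod_erase (Finset.Icc 1 n)
      (fun x => Real.cos (f (O.θbar x)) / Real.cos (O.θbar x)) hi]
    nlinarith
  · -- contraction bound
    rw [Finset.abs_prod]
    calc ∏ i ∈ Finset.Icc 1 n, |f' (O.θbar i)| ≤ ∏ i ∈ Finset.Icc 1 n, lam :=
          Finset.prod_le_prod (fun i _ => abs_nonneg _) (fun i _ => hfd' _ (habs i))
      _ = lam ^ n := by rw [Finset.prod_const, Nat.card_Icc]; norm_num
  · exact pow_lt_one₀ hlam0 hlam1 (by omega)
end

section
/- Let 0 ≤ λ_q ≤ 1/2, and suppose f satisfies f(δπ/q) ≤ δ·f(π/q) for 0 ≤ δ ≤ 1 with f(π/q) = λ_q·π/q. Set θ̂ = (π/q)(1 − λ_q). Then for all n ≥ 0, f^{n+1}(θ̂) ≤ (π/q)·λ_q^{n+1}(1 − λ_q), hence by convexity of tan on [0, π/2), tan(f^{n+1}(θ̂)) ≤ 2 tan(π/(2q))·λ_q^{n+1}(1 − λ_q), and therefore cot(π/(2q))·∑_{n=0}^∞ tan(f^{n+1}(θ̂)) ≤ 2λ_q ≤ 1. -/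
open Real

lemma tan_convexOn {a : ℝ} (ha0 : 0 ≤ a) (ha : a < π / 2) :
    ConvexOn ℝ (Set.Icc (0:ℝ) a) Real.tan := by
  apply MonotoneOn.convexOn_of_deriv (convex_Icc 0 a)
  · intro x hx
    exact (Real.continuousAt_tan.2 (ne_of_gt (Real.cos_pos_of_mem_Ioo
      ⟨by nlinarith [hx.1, pi_pos], lt_of_le_of_lt hx.2 ha⟩))).continuousWithinAt
  · intro x hx
    rw [interior_Icc] at hx
    exact (Real.differentiableAt_tan_of_mem_Ioo
      ⟨by nlinarith [hx.1, pi_pos], hx.2.trans ha⟩).differentiableWithinAt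
  · rw [interior_Icc]
    intro x hx y hy hxy
    have hcy : 0 < Real.cos y := Real.cos_pos_of_mem_Ioo
      ⟨by nlinarith [hy.1, pi_pos], hy.2.trans ha⟩
    have hcx : Real.cos y ≤ Real.cos x := by
      apply Real.cos_le_cos_of_nonneg_of_le_pi hx.1.le _ hxy
      nlinarith [hy.2, ha, pi_pos]
    simp only [Real.deriv_tan]
    apply div_le_div_of_nonneg_left one_pos.le (by positivity)
    nlinarith
  
lemma tan_le_lin {a x : ℝ} (hx0 : 0 ≤ x) (hxa : x ≤ a) (ha0 : 0 < a) (ha : a < π / 2) :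
    Real.tan x ≤ (x / a) * Real.tan a := by
  have ht1 : x / a ≤ 1 := (div_le_one ha0).2 hxa
  have ht0 : 0 ≤ x / a := by positivity
  have h := (tan_convexOn ha0.le ha).2 (Set.left_mem_Icc.2 ha0.le)
    (Set.right_mem_Icc.2 ha0.le) (by linarith : (0:ℝ) ≤ 1 - x / a) ht0 (by ring)
  have hv : (1 - x / a) • (0:ℝ) + (x / a) • a = x := by
    simp only [smul_eq_mul]; field_simp; ring
  rw [hv, Real.tan_zero] at h
  simp only [smul_eq_mul] at h
  linarith

/-- The trapping estimate for even regular polygons: with `f(π/q) = λ_q·π/q`,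
`0 ≤ λ_q ≤ 1/2`, `f(δπ/q) ≤ δ f(π/q)` for `0 ≤ δ ≤ 1`, and `θ̂ = (π/q)(1 − λ_q)`, one
has `f^(n+1)(θ̂) ≤ (π/q) λ_q^(n+1) (1 − λ_q)` for all `n ≥ 0`, hence by convexity of
`tan` the bound `tan (f^(n+1)(θ̂)) ≤ 2 tan (π/(2q)) λ_q^(n+1) (1 − λ_q)`, and therefore
`cot (π/(2q)) ∑ₙ tan (f^(n+1)(θ̂)) ≤ 2 λ_q ≤ 1`. -/
theorem even_polygon_trapping (q : ℕ) (hq : 3 ≤ q) (f : ℝ → ℝ) (lamq : ℝ)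
    (hlamq0 : 0 ≤ lamq) (hlamq : lamq ≤ 1 / 2)
    (hval : f (π / q) = lamq * (π / q))
    (hscale : ∀ δ : ℝ, 0 ≤ δ → δ ≤ 1 → f (δ * (π / q)) ≤ δ * f (π / q))
    (hpos : ∀ x ∈ Set.Icc (0 : ℝ) (π / q), 0 ≤ f x)
    (hmono : MonotoneOn f (Set.Icc (0 : ℝ) (π / q))) :
    (∀ n : ℕ, f^[n + 1] (π / q * (1 - lamq)) ≤ π / q * lamq ^ (n + 1) * (1 - lamq)) ∧
    (∀ n : ℕ, Real.tan (f^[n + 1] (π / q * (1 - lamq))) ≤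
      2 * Real.tan (π / (2 * q)) * lamq ^ (n + 1) * (1 - lamq)) ∧
    Summable (fun n : ℕ => Real.tan (f^[n + 1] (π / q * (1 - lamq)))) ∧
    (Real.tan (π / (2 * q)))⁻¹ *
        ∑' n : ℕ, Real.tan (f^[n + 1] (π / q * (1 - lamq))) ≤ 2 * lamq ∧
    2 * lamq ≤ 1 := by
  have hπ : (0:ℝ) < π := pi_pos
  have hq3 : (3:ℝ) ≤ q := by exact_mod_cast hq
  have hqpos : (0:ℝ) < q := by linarith
  set α : ℝ := π / q with hα
  have hα0 : 0 < α := by positivity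
  have ha : π / (2 * q) = α / 2 := by rw [hα]; ring
  have ha0 : 0 < α / 2 := by positivity
  have hαπ : α < π := by
    rw [hα]; exact div_lt_self hπ (by linarith)
  have halt : α / 2 < π / 2 := by linarith
  have hα2 : α ≤ π / 2 := by
    rw [hα]; exact div_le_div_of_nonneg_left hπ.le two_pos (by linarith)
  have hlam1 : lamq ≤ 1 := by linarith
  -- key bounds by induction
  have key : ∀ n : ℕ, 0 ≤ f^[n + 1] (α * (1 - lamq)) ∧
      f^[n + 1] (α * (1 - lamq)) ≤ α * lamq ^ (n + 1) * (1 - lamq) := by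
    intro n
    induction n with
    | zero =>
      have hθmem : α * (1 - lamq) ∈ Set.Icc (0:ℝ) α := by
        constructor
        · exact mul_nonneg hα0.le (by linarith)
        · calc α * (1 - lamq) ≤ α * 1 := mul_le_mul_of_nonneg_left (by linarith) hα0.le
            _ = α := mul_one α
      refine ⟨by simpa using hpos _ hθmem, ?_⟩
      have h := hscale (1 - lamq) (by linarith) (by linarith)
      rw [hval] at h
      have he : (1 - lamq) * α = α * (1 - lamq) := by ring
      rw [he] at h
      simp only [zero_add, Function.iterate_one]
      calc f (α * (1 - lamq)) ≤ (1 - lamq) * (lamq * α) := h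
        _ = α * lamq ^ 1 * (1 - lamq) := by ring
    | succ n ih =>
      obtain ⟨ih0, ih1⟩ := ih
      set δ : ℝ := lamq ^ (n + 1) * (1 - lamq) with hδ
      have hδ0 : 0 ≤ δ := by
        rw [hδ]; exact mul_nonneg (pow_nonneg hlamq0 _) (by linarith)
      have hδ1 : δ ≤ 1 := by
        rw [hδ]
        exact mul_le_one₀ (pow_le_one₀ hlamq0 hlam1) (by linarith) (by linarith)
      have hxmem : f^[n + 1] (α * (1 - lamq)) ∈ Set.Icc (0:ℝ) α := by
        refine ⟨ih0, ?_⟩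
        calc f^[n + 1] (α * (1 - lamq)) ≤ α * lamq ^ (n + 1) * (1 - lamq) := ih1
          _ = δ * α := by rw [hδ]; ring
          _ ≤ 1 * α := mul_le_mul_of_nonneg_right hδ1 hα0.le
          _ = α := one_mul α
      have hδmem : δ * α ∈ Set.Icc (0:ℝ) α :=
        ⟨mul_nonneg hδ0 hα0.le, by
          calc δ * α ≤ 1 * α := mul_le_mul_of_nonneg_right hδ1 hα0.le
            _ = α := one_mul α⟩
      have h1 : f (f^[n + 1] (α * (1 - lamq))) ≤ f (δ * α) := by
        apply hmono hxmem hδmem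
        calc f^[n + 1] (α * (1 - lamq)) ≤ α * lamq ^ (n+1) * (1 - lamq) := ih1
          _ = δ * α := by rw [hδ]; ring
      have h2 : f (δ * α) ≤ δ * f α := hscale δ hδ0 hδ1
      rw [Function.iterate_succ_apply']
      constructor
      · exact hpos _ hxmem
      · calc f (f^[n + 1] (α * (1 - lamq))) ≤ δ * f α := le_trans h1 h2
          _ = δ * (lamq * α) := by rw [hval]
          _ = α * lamq ^ (n + 1 + 1) * (1 - lamq) := by rw [hδ]; ring
  have part1 : ∀ n : ℕ, f^[n + 1] (π / q * (1 - lamq)) ≤ π / q * lamq ^ (n + 1) * (1 - lamq) :=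
    fun n => (key n).2
  -- tan bound
  have tanbd : ∀ n : ℕ, Real.tan (f^[n + 1] (π / q * (1 - lamq))) ≤
      2 * Real.tan (π / (2 * q)) * lamq ^ (n + 1) * (1 - lamq) := by
    intro n
    obtain ⟨h0, h1⟩ := key n
    set x := f^[n + 1] (α * (1 - lamq)) with hx
    have hpow : lamq ^ (n + 1) ≤ lamq := by
      calc lamq ^ (n + 1) = lamq ^ n * lamq := by ring
        _ ≤ 1 * lamq := mul_le_mul_of_nonneg_right (pow_le_one₀ hlamq0 hlam1) hlamq0
        _ = lamq := one_mul _
    have hhalf : lamq ^ (n + 1) * (1 - lamq) ≤ 1 / 2 := by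
      have := mul_le_of_le_one_right (pow_nonneg hlamq0 (n + 1)) (by linarith : 1 - lamq ≤ 1)
      linarith
    have hxa : x ≤ α / 2 := by
      calc x ≤ α * lamq ^ (n + 1) * (1 - lamq) := h1
        _ = α * (lamq ^ (n + 1) * (1 - lamq)) := by ring
        _ ≤ α * (1 / 2) := mul_le_mul_of_nonneg_left hhalf hα0.le
        _ = α / 2 := by ring
    have := tan_le_lin h0 hxa ha0 halt
    rw [ha]
    calc Real.tan x ≤ (x / (α / 2)) * Real.tan (α / 2) := this
      _ ≤ (2 * lamq ^ (n + 1) * (1 - lamq)) * Real.tan (α / 2) := by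
          apply mul_le_mul_of_nonneg_right _ (Real.tan_nonneg_of_nonneg_of_le_pi_div_two (by linarith) (by linarith))
          rw [div_le_iff₀ ha0]
          calc x ≤ α * lamq ^ (n + 1) * (1 - lamq) := h1
            _ = 2 * lamq ^ (n + 1) * (1 - lamq) * (α / 2) := by ring
      _ = 2 * Real.tan (α / 2) * lamq ^ (n + 1) * (1 - lamq) := by ring
  have tannn : ∀ n : ℕ, 0 ≤ Real.tan (f^[n + 1] (π / q * (1 - lamq))) := by
    intro n
    obtain ⟨h0, h1⟩ := key n
    apply Real.tan_nonneg_of_nonneg_of_le_pi_div_two h0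
    have hpow : lamq ^ (n + 1) ≤ 1 := pow_le_one₀ hlamq0 hlam1
    have hp1 : lamq ^ (n + 1) * (1 - lamq) ≤ 1 :=
      mul_le_one₀ (pow_le_one₀ hlamq0 hlam1) (by linarith) (by linarith)
    have hp0 : 0 ≤ lamq ^ (n + 1) * (1 - lamq) :=
      mul_nonneg (pow_nonneg hlamq0 _) (by linarith)
    have hb : α * lamq ^ (n + 1) * (1 - lamq) ≤ α := by
      calc α * lamq ^ (n + 1) * (1 - lamq) = α * (lamq ^ (n + 1) * (1 - lamq)) := by ring
        _ ≤ α * 1 := mul_le_mul_of_nonneg_left hp1 hα0.le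
        _ = α := mul_one α
    linarith
  have htan0 : 0 < Real.tan (π / (2 * q)) := by
    rw [ha]
    exact Real.tan_pos_of_pos_of_lt_pi_div_two ha0 halt
  -- summability
  have hsum : Summable (fun n : ℕ => 2 * Real.tan (π / (2 * q)) * lamq ^ (n + 1) * (1 - lamq)) := by
    have : Summable (fun n : ℕ => lamq ^ n) :=
      summable_geometric_of_lt_one hlamq0 (by linarith)
    apply Summable.mul_right
    simpa [pow_succ, mul_comm, mul_assoc, mul_left_comm] using (this.mul_left (2 * Real.tan (π / (2 * q)) * lamq))
  have hsummable : Summable (fun n : ℕ => Real.tan (f^[n + 1] (π / q * (1 - lamq)))) :=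
    Summable.of_nonneg_of_le tannn tanbd hsum
  refine ⟨part1, tanbd, hsummable, ?_, by linarith⟩
  have htsum_le : ∑' n : ℕ, Real.tan (f^[n + 1] (π / q * (1 - lamq))) ≤
      ∑' n : ℕ, 2 * Real.tan (π / (2 * q)) * lamq ^ (n + 1) * (1 - lamq) :=
    Summable.tsum_le_tsum tanbd hsummable hsum
  have h1lam : (1 - lamq) ≠ 0 := by intro h; linarith [hlamq]
  have hgeo : ∑' n : ℕ, 2 * Real.tan (π / (2 * q)) * lamq ^ (n + 1) * (1 - lamq)
      = 2 * Real.tan (π / (2 * q)) * lamq := by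
    have e1 : (fun n : ℕ => 2 * Real.tan (π / (2 * q)) * lamq ^ (n + 1) * (1 - lamq))
        = fun n : ℕ => (2 * Real.tan (π / (2 * q)) * (1 - lamq) * lamq) * lamq ^ n := by
      funext n; ring
    rw [e1, tsum_mul_left, tsum_geometric_of_lt_one hlamq0 (by linarith)]
    field_simp
  rw [hgeo] at htsum_le
  calc (Real.tan (π / (2 * q)))⁻¹ * ∑' n : ℕ, Real.tan (f^[n + 1] (π / q * (1 - lamq)))
      ≤ (Real.tan (π / (2 * q)))⁻¹ * (2 * Real.tan (π / (2 * q)) * lamq) := by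
        apply mul_le_mul_of_nonneg_left htsum_le (by positivity)
    _ = 2 * lamq := by field_simp
end
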